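/- arXiv:1503.03739 — 7 statements merged into one kernel-verified Lean document; each statement's English description precedes it below -/
import Mathlib

section
/- If a Bayesian game has a universal potential function Φ : A → ℝ (i.e., for every action profile a and every unilateral deviation a_i', c_i(a) − c_i(a_i', a_{-i}) = Φ(a) − Φ(a_i', a_{-i})), then the induced normal-form game over Bayesian strategies s_i : T_i → A_i with costs K_i(s) = E_t[c_i(s(t))] is an exact potential game with potential Ψ(s) = E_t[Φ(s(t))]. -/
/-- In a Bayesian game with a universal exact potential `Φ`,
the induced normal-form game over Bayesian strategies with expected costs
`K i s = E_t[c i (s(t))]` is an exact potential game with potential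
`Ψ s = E_t[Φ (s(t))]`. -/
theorem bayesian_potential_game
    {n : ℕ} {T : Fin n → Type*} {A : Fin n → Type*}
    [∀ i, Fintype (T i)] [∀ i, Fintype (A i)]
    (π : ∀ i, T i → ℝ)
    (hπ0 : ∀ i t, 0 ≤ π i t) (hπ1 : ∀ i, ∑ t, π i t = 1)
    (c : Fin n → (∀ i, A i) → ℝ) (Φ : (∀ i, A i) → ℝ)
    (hpot : ∀ (a : ∀ i, A i) (i : Fin n) (a' : A i),
      c i a - c i (Function.update a i a') = Φ a - Φ (Function.update a i a'))
    (K : Fin n → (∀ i, T i → A i) → ℝ)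
    (hK : ∀ i s, K i s =
      ∑ t : ∀ j, T j, (∏ j, π j (t j)) * c i (fun j => s j (t j)))
    (Ψ : (∀ i, T i → A i) → ℝ)
    (hΨ : ∀ s, Ψ s =
      ∑ t : ∀ j, T j, (∏ j, π j (t j)) * Φ (fun j => s j (t j))) :
    ∀ (s : ∀ i, T i → A i) (i : Fin n) (s' : T i → A i),
      K i s - K i (Function.update s i s') = Ψ s - Ψ (Function.update s i s') := by
  intro s i s'
  have key : ∀ t : ∀ j, T j,
      (fun j => Function.update s i s' j (t j)) =
        Function.update (fun j => s j (t j)) i (s' (t i)) := by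
    intro t; funext j
    by_cases h : j = i
    · subst h; simp
    · simp [Function.update_of_ne h]
  rw [hK, hK, hΨ, hΨ, ← Finset.sum_sub_distrib, ← Finset.sum_sub_distrib]
  refine Finset.sum_congr rfl fun t _ => ?_
  rw [← mul_sub, ← mul_sub, key, hpot]
end

section
/- Bayesian Potential Method: In a Bayesian potential game whose universal potential Φ is (λ, μ)-close to the universal social cost C (i.e., λ·C(a) ≤ Φ(a) ≤ μ·C(a) for all action profiles a, with λ, μ > 0), the Bayesian price of stability is at most (μ/λ)·IG, where IG is the information gap. Concretely: the potential-minimizing Bayes-Nash equilibrium s* satisfies K(s*) ≤ (μ/λ)·IG·E_t[OPT(t)]. -/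
/-- Bayesian Potential Method: in a Bayesian potential game
whose universal potential `Φ` is `(lam, mu)`-close to the universal social
cost `C(a) = ∑ i, c i a`, the potential-minimizing Bayes-Nash equilibrium
`sstar` satisfies `K(sstar) ≤ (mu/lam) · IG · E_t[OPT(t)]`, where
`IG = K(stilde)/E_t[OPT(t)]` and `stilde` minimizes the expected social
cost `K` over all (feasible) Bayesian strategy profiles. -/
theorem bayesian_potential_method
    {n : ℕ} {T : Fin n → Type*} {A : Fin n → Type*}
    [∀ i, Fintype (T i)] [∀ i, Fintype (A i)]
    (π : ∀ i, T i → ℝ)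
    (hπ0 : ∀ i t, 0 ≤ π i t) (hπ1 : ∀ i, ∑ t, π i t = 1)
    (c : Fin n → (∀ i, A i) → ℝ) (Φ : (∀ i, A i) → ℝ)
    (hpot : ∀ (a : ∀ i, A i) (i : Fin n) (a' : A i),
      c i a - c i (Function.update a i a') = Φ a - Φ (Function.update a i a'))
    (lam mu : ℝ) (hlam : 0 < lam) (hmu : 0 < mu)
    (hclose : ∀ a : ∀ i, A i,
      lam * (∑ i, c i a) ≤ Φ a ∧ Φ a ≤ mu * (∑ i, c i a))
    (F : ∀ i, T i → Set (A i))
    -- expected social cost of a Bayesian strategy profile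
    (K : (∀ i, T i → A i) → ℝ)
    (hKdef : ∀ s, K s =
      ∑ t : ∀ j, T j, (∏ j, π j (t j)) * ∑ i, c i (fun j => s j (t j)))
    -- ex-post optimal social cost for each type profile
    (opt : (∀ j, T j) → ℝ)
    (hopt : ∀ t : ∀ j, T j, IsLeast
      {x | ∃ a : ∀ i, A i, (∀ i, a i ∈ F i (t i)) ∧ x = ∑ i, c i a} (opt t))
    (EOPT : ℝ) (hEOPTdef : EOPT = ∑ t : ∀ j, T j, (∏ j, π j (t j)) * opt t)
    (hEOPT : 0 < EOPT)
    -- stilde : the social-cost minimizing Bayesian strategy profile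
    (stilde : ∀ i, T i → A i)
    (hstfeas : ∀ i t, stilde i t ∈ F i t)
    (hstmin : ∀ s : ∀ i, T i → A i, (∀ i t, s i t ∈ F i t) → K stilde ≤ K s)
    -- the information gap
    (IG : ℝ) (hIG : IG = K stilde / EOPT)
    -- sstar : the potential-minimizing Bayes-Nash equilibrium
    (sstar : ∀ i, T i → A i)
    (hsfeas : ∀ i t, sstar i t ∈ F i t)
    (hsmin : ∀ s : ∀ i, T i → A i, (∀ i t, s i t ∈ F i t) →
      (∑ t : ∀ j, T j, (∏ j, π j (t j)) * Φ (fun j => sstar j (t j)))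
        ≤ ∑ t : ∀ j, T j, (∏ j, π j (t j)) * Φ (fun j => s j (t j))) :
    K sstar ≤ (mu / lam) * IG * EOPT := by
  have hπprod : ∀ t : ∀ j, T j, 0 ≤ ∏ j, π j (t j) := fun t =>
    Finset.prod_nonneg fun j _ => hπ0 j (t j)
  have h1 : lam * K sstar ≤ ∑ t : ∀ j, T j, (∏ j, π j (t j)) * Φ (fun j => sstar j (t j)) := by
    rw [hKdef, Finset.mul_sum]
    apply Finset.sum_le_sum
    intro t _
    rw [mul_left_comm]
    exact mul_le_mul_of_nonneg_left (hclose _).1 (hπprod t)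
  have h2 : (∑ t : ∀ j, T j, (∏ j, π j (t j)) * Φ (fun j => stilde j (t j))) ≤ mu * K stilde := by
    rw [hKdef, Finset.mul_sum]
    apply Finset.sum_le_sum
    intro t _
    rw [mul_left_comm]
    exact mul_le_mul_of_nonneg_left (hclose _).2 (hπprod t)
  have h3 := hsmin stilde hstfeas
  have hmain : lam * K sstar ≤ mu * K stilde := le_trans h1 (le_trans h3 h2)
  have hKt : IG * EOPT = K stilde := by
    rw [hIG]; field_simp
  rw [mul_assoc, hKt, div_mul_eq_mul_div, le_div_iff₀ hlam, mul_comm (K sstar) lam]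
  linarith [hmain]
end

section
/- Rosenthal's potential Φ(a) = Σ_{e∈E} Σ_{t=1}^{n_e(a)} c_e/t of a network design (fair cost sharing) game with n players is (1, H_n)-close to the social cost C(a) = Σ_{e : n_e(a)≥1} c_e, i.e., C(a) ≤ Φ(a) ≤ H_n · C(a) for every action profile a, where H_n = Σ_{k=1}^n 1/k. -/
open Finset

/-- Rosenthal's potential of a fair cost-sharing (network design)
game with `n` players is `(1, H_n)`-close to the social cost:
`C(a) ≤ Φ(a) ≤ H_n · C(a)` for every action profile `a`. -/
theorem rosenthal_potential_close
    {E : Type*} [Fintype E] [DecidableEq E] (n : ℕ)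
    (c : E → ℝ) (hc : ∀ e, 0 ≤ c e)
    (a : Fin n → Finset E) :
    (∑ e ∈ univ.filter (fun e => 1 ≤ (univ.filter (fun i => e ∈ a i)).card), c e)
      ≤ (∑ e : E, ∑ t ∈ Finset.range ((univ.filter (fun i => e ∈ a i)).card),
          c e / (t + 1))
    ∧ (∑ e : E, ∑ t ∈ Finset.range ((univ.filter (fun i => e ∈ a i)).card),
          c e / (t + 1))
      ≤ (∑ k ∈ Finset.range n, (1 : ℝ) / (k + 1)) *
          ∑ e ∈ univ.filter (fun e => 1 ≤ (univ.filter (fun i => e ∈ a i)).card), c e := by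
  have hcard : ∀ e : E, (univ.filter (fun i => e ∈ a i)).card ≤ n := by
    intro e
    simpa using (card_filter_le (univ : Finset (Fin n)) _)
  constructor
  · rw [← Finset.sum_filter_add_sum_filter_not (univ : Finset E)
      (fun e => 1 ≤ (univ.filter (fun i => e ∈ a i)).card)]
    have h2 : (0:ℝ) ≤ ∑ e ∈ univ.filter (fun e =>
        ¬ 1 ≤ (univ.filter (fun i => e ∈ a i)).card),
        ∑ t ∈ Finset.range ((univ.filter (fun i => e ∈ a i)).card), c e / (t + 1) := by
      apply Finset.sum_nonneg; intro e _
      apply Finset.sum_nonneg; intro t _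
      exact div_nonneg (hc e) (by positivity)
    have h1 : (∑ e ∈ univ.filter (fun e => 1 ≤ (univ.filter (fun i => e ∈ a i)).card), c e)
        ≤ ∑ e ∈ univ.filter (fun e => 1 ≤ (univ.filter (fun i => e ∈ a i)).card),
          ∑ t ∈ Finset.range ((univ.filter (fun i => e ∈ a i)).card), c e / (t + 1) := by
      apply Finset.sum_le_sum
      intro e he
      simp only [mem_filter] at he
      calc c e = c e / ((0:ℕ) + 1) := by norm_num
        _ ≤ ∑ t ∈ Finset.range ((univ.filter (fun i => e ∈ a i)).card), c e / (t + 1) := by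
            apply Finset.single_le_sum (f := fun t : ℕ => c e / (t + 1))
            · intro t _; exact div_nonneg (hc e) (by positivity)
            · simpa using he.2
    linarith
  · rw [Finset.mul_sum]
    rw [← Finset.sum_filter_add_sum_filter_not (univ : Finset E)
      (fun e => 1 ≤ (univ.filter (fun i => e ∈ a i)).card)
      (fun e => ∑ t ∈ Finset.range ((univ.filter (fun i => e ∈ a i)).card), c e / (t + 1))]
    have h2 : (∑ e ∈ univ.filter (fun e =>
        ¬ 1 ≤ (univ.filter (fun i => e ∈ a i)).card),
        ∑ t ∈ Finset.range ((univ.filter (fun i => e ∈ a i)).card), c e / (t + 1)) = 0 := by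
      apply Finset.sum_eq_zero
      intro e he
      simp only [mem_filter, not_le, Nat.lt_one_iff] at he
      rw [he.2]; simp
    rw [h2, add_zero]
    apply Finset.sum_le_sum
    intro e he
    calc (∑ t ∈ Finset.range ((univ.filter (fun i => e ∈ a i)).card), c e / (t + 1))
        = c e * ∑ t ∈ Finset.range ((univ.filter (fun i => e ∈ a i)).card), 1 / ((t:ℝ) + 1) := by
          rw [Finset.mul_sum]; congr 1; ext t; field_simp
      _ ≤ c e * ∑ k ∈ Finset.range n, (1:ℝ) / (k + 1) := by
          apply mul_le_mul_of_nonneg_left _ (hc e)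
          apply Finset.sum_le_sum_of_subset_of_nonneg
          · exact Finset.range_subset_range.2 (hcard e)
          · intro k _ _; positivity
      _ = (∑ k ∈ Finset.range n, (1:ℝ) / (k + 1)) * c e := mul_comm _ _
end

section
/- For the metric Steiner tree problem, the cost shares ξ(D, x) = (1/2)·d(D∪{r}∖{x}, x) for x ∈ D (and 0 otherwise) are competitive: Σ_{x∈D} ξ(D, x) ≤ c(OPT(D)), where OPT(D) is a minimum-cost Steiner tree connecting D ∪ {r}. -/
open Finset

noncomputable def walkCost {V : Type*} [PseudoMetricSpace V] : List V → ℝ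
  | a :: b :: l => dist a b + walkCost (b :: l)
  | _ => 0

@[simp] lemma walkCost_nil {V : Type*} [PseudoMetricSpace V] :
    walkCost ([] : List V) = 0 := rfl

@[simp] lemma walkCost_single {V : Type*} [PseudoMetricSpace V] (a : V) :
    walkCost [a] = 0 := rfl

@[simp] lemma walkCost_cons_cons {V : Type*} [PseudoMetricSpace V] (a b : V) (l : List V) :
    walkCost (a :: b :: l) = dist a b + walkCost (b :: l) := rfl

lemma walkCost_splice {V : Type*} [PseudoMetricSpace V] (u w : V) :
    ∀ (A B : List V),
      walkCost (A ++ u :: w :: u :: B) = walkCost (A ++ u :: B) + dist u w + dist w u := by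
  intro A B
  induction A with
  | nil => simp; ring
  | cons a A' ih =>
    cases A' with
    | nil => simp at ih ⊢; linarith
    | cons a' A'' => simp at ih ⊢; linarith

lemma getLast?_append_cons {V : Type*} :
    ∀ (A : List V) (b : V) (C : List V), (A ++ b :: C).getLast? = (b :: C).getLast? := by
  intro A
  induction A with
  | nil => intro b C; rfl
  | cons a A' ih =>
    intro b C
    cases A' with
    | nil => simp [List.getLast?_cons_cons]
    | cons a' A'' =>
      rw [List.cons_append, List.cons_append, List.getLast?_cons_cons,
        ← List.cons_append]
      exact ih b C

lemma cross_edge {V : Type*} (stp : V → V → Prop) (P : V → Prop) :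
    ∀ {x y : V}, Relation.ReflTransGen stp x y → P x → ¬ P y →
      ∃ u w, P u ∧ ¬ P w ∧ stp u w := by
  intro x y h
  induction h with
  | refl => exact fun hx hy => absurd hx hy
  | @tail b c hxb hbc ih =>
    intro hx hy
    by_cases hb : P b
    · exact ⟨b, c, hb, hy, hbc⟩
    · exact ih hx hb

lemma lemE {V : Type*} [MetricSpace V] [DecidableEq V] (S : Finset V) (r : V) :
    ∀ (L : List V) (a : V) (T : Finset V) (z : V),
      a ∈ S → a ∉ T → r ∉ T → (∀ x ∈ T, x ∈ S) → (∀ x ∈ T, x ∈ L) →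
      (a ∈ S.erase r ∨ T.Nonempty) → (a :: L).getLast? = some z →
      ∑ x ∈ T, Metric.infDist x (↑(S.erase x) : Set V)
        + Metric.infDist r (↑(S.erase r) : Set V)
        ≤ walkCost (a :: L) + dist r z := by
  intro L
  induction L with
  | nil =>
    intro a T z ha haT hrT hTS hTL hinv hz
    have hT : T = ∅ := Finset.eq_empty_of_forall_notMem fun x hx => by
      simpa using hTL x hx
    subst hT
    have haE : a ∈ S.erase r := by
      rcases hinv with h | h
      · exact h
      · exact absurd h (by simp)
    have hza : z = a := by simpa using hz.symm
    have hle : Metric.infDist r (↑(S.erase r) : Set V) ≤ dist r a :=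
      Metric.infDist_le_dist_of_mem (by exact_mod_cast haE)
    simp only [Finset.sum_empty, zero_add, walkCost_single, hza]
    linarith
  | cons b L' ih =>
    intro a T z ha haT hrT hTS hTL hinv hz
    rw [List.getLast?_cons_cons] at hz
    by_cases hb : b ∈ T
    · have hbS := hTS b hb
      have hbr : b ≠ r := by rintro rfl; exact hrT hb
      have h1 : Metric.infDist b (↑(S.erase b) : Set V) ≤ dist a b := by
        rw [dist_comm]
        refine Metric.infDist_le_dist_of_mem ?_
        exact_mod_cast Finset.mem_erase.mpr ⟨by rintro rfl; exact haT hb, ha⟩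
      have ihres := ih b (T.erase b) z hbS (Finset.notMem_erase _ _)
        (fun h => hrT (Finset.mem_of_mem_erase h))
        (fun x hx => hTS x (Finset.mem_of_mem_erase hx))
        (fun x hx => by
          have hxT := Finset.mem_of_mem_erase hx
          have hxb : x ≠ b := (Finset.mem_erase.mp hx).1
          have := hTL x hxT
          simp only [List.mem_cons] at this
          tauto)
        (Or.inl (Finset.mem_erase.mpr ⟨hbr, hbS⟩)) hz
      have hsum : ∑ x ∈ T.erase b, Metric.infDist x (↑(S.erase x) : Set V)
          + Metric.infDist b (↑(S.erase b) : Set V)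
          = ∑ x ∈ T, Metric.infDist x (↑(S.erase x) : Set V) :=
        Finset.sum_erase_add T _ hb
      rw [walkCost_cons_cons]
      linarith
    · cases L' with
      | nil =>
        have hT : T = ∅ := Finset.eq_empty_of_forall_notMem fun x hx => by
          have := hTL x hx
          simp only [List.mem_cons, List.not_mem_nil, or_false] at this
          exact hb (this ▸ hx)
        subst hT
        have haE : a ∈ S.erase r := by
          rcases hinv with h | h
          · exact h
          · exact absurd h (by simp)
        have hzb : z = b := by simpa using hz.symm
        subst hzb
        have h1 : Metric.infDist r (↑(S.erase r) : Set V) ≤ dist r a :=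
          Metric.infDist_le_dist_of_mem (by exact_mod_cast haE)
        have h2 : dist r a ≤ dist r z + dist z a := dist_triangle r z a
        simp only [Finset.sum_empty, zero_add, walkCost_cons_cons, walkCost_single]
        have := dist_comm a z
        linarith
      | cons c L'' =>
        have hz' : (a :: c :: L'').getLast? = some z := by
          rw [List.getLast?_cons_cons] at hz ⊢
          exact hz
        have ihres := ih a T z ha haT hrT hTS
          (fun x hx => by
            have := hTL x hx
            simp only [List.mem_cons] at this ⊢
            have hxb : x ≠ b := fun h => hb (h ▸ hx)
            tauto)
          hinv hz'
        rw [walkCost_cons_cons] at ihres ⊢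
        have hbc := walkCost_cons_cons b c L''
        have := dist_triangle a b c
        linarith

lemma walkCost_nonneg {V : Type*} [PseudoMetricSpace V] :
    ∀ (L : List V), 0 ≤ walkCost L := by
  intro L
  induction L with
  | nil => simp
  | cons a L' ih =>
    cases L' with
    | nil => simp
    | cons b L'' =>
      rw [walkCost_cons_cons]
      have := dist_nonneg (x := a) (y := b)
      have h2 := ih
      -- ih : 0 ≤ walkCost (b :: L'')? no, ih is about L' = b :: L''
      linarith

lemma grow {V : Type*} [MetricSpace V] [DecidableEq V]
    (Es : Finset (V × V)) (S : Finset V) (r : V)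
    (hc : ∀ x ∈ S, Relation.ReflTransGen (fun u v => (u, v) ∈ Es ∨ (v, u) ∈ Es) r x) :
    ∀ (n : ℕ) (W : List V) (F : Finset (V × V)),
      W.head? = some r → W.getLast? = some r → F ⊆ Es →
      (∀ e ∈ F, e.1 ∈ W ∧ e.2 ∈ W) →
      walkCost W ≤ 2 * ∑ e ∈ F, dist e.1 e.2 →
      (((Es.image Prod.fst ∪ Es.image Prod.snd) \ W.toFinset).card ≤ n) →
      ∃ W' : List V, W'.head? = some r ∧ W'.getLast? = some r ∧
        (∀ x ∈ S, x ∈ W') ∧ walkCost W' ≤ 2 * ∑ e ∈ Es, dist e.1 e.2 := by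
  intro n
  induction n with
  | zero =>
    intro W F hhead hlast hFEs hFW hcost hcard
    by_cases hcov : ∀ x ∈ S, x ∈ W
    · refine ⟨W, hhead, hlast, hcov, ?_⟩
      have : ∑ e ∈ F, dist e.1 e.2 ≤ ∑ e ∈ Es, dist e.1 e.2 :=
        Finset.sum_le_sum_of_subset_of_nonneg hFEs (fun _ _ _ => dist_nonneg)
      linarith
    · exfalso
      push_neg at hcov
      obtain ⟨x, hxS, hxW⟩ := hcov
      have hrW : r ∈ W := by
        cases W with
        | nil => simp at hhead
        | cons a t => simp at hhead; simp [hhead]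
      obtain ⟨u, w, huW, hwW, hstep⟩ := cross_edge _ (· ∈ W) (hc x hxS) hrW hxW
      have hwVs : w ∈ Es.image Prod.fst ∪ Es.image Prod.snd := by
        rcases hstep with h | h
        · exact Finset.mem_union_right _ (Finset.mem_image.mpr ⟨_, h, rfl⟩)
        · exact Finset.mem_union_left _ (Finset.mem_image.mpr ⟨_, h, rfl⟩)
      have : w ∈ (Es.image Prod.fst ∪ Es.image Prod.snd) \ W.toFinset :=
        Finset.mem_sdiff.mpr ⟨hwVs, by simpa using hwW⟩
      have := Finset.card_pos.mpr ⟨w, this⟩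
      omega
  | succ m ih =>
    intro W F hhead hlast hFEs hFW hcost hcard
    by_cases hcov : ∀ x ∈ S, x ∈ W
    · refine ⟨W, hhead, hlast, hcov, ?_⟩
      have : ∑ e ∈ F, dist e.1 e.2 ≤ ∑ e ∈ Es, dist e.1 e.2 :=
        Finset.sum_le_sum_of_subset_of_nonneg hFEs (fun _ _ _ => dist_nonneg)
      linarith
    · push_neg at hcov
      obtain ⟨x, hxS, hxW⟩ := hcov
      have hrW : r ∈ W := by
        cases W with
        | nil => simp at hhead
        | cons a t => simp at hhead; simp [hhead]
      obtain ⟨u, w, huW, hwW, hstep⟩ := cross_edge _ (· ∈ W) (hc x hxS) hrW hxW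
      have hwVs : w ∈ Es.image Prod.fst ∪ Es.image Prod.snd := by
        rcases hstep with h | h
        · exact Finset.mem_union_right _ (Finset.mem_image.mpr ⟨_, h, rfl⟩)
        · exact Finset.mem_union_left _ (Finset.mem_image.mpr ⟨_, h, rfl⟩)
      -- pick the edge
      obtain ⟨e, heEs, hde, hwe, he1, he2⟩ :
          ∃ e ∈ Es, dist e.1 e.2 = dist u w ∧ (e.1 = w ∨ e.2 = w) ∧
            (e.1 = u ∨ e.1 = w) ∧ (e.2 = u ∨ e.2 = w) := by
        rcases hstep with h | h
        · exact ⟨(u, w), h, rfl, Or.inr rfl, Or.inl rfl, Or.inr rfl⟩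
        · exact ⟨(w, u), h, dist_comm w u, Or.inl rfl, Or.inr rfl, Or.inl rfl⟩
      have heF : e ∉ F := fun h => by
        rcases hwe with h1 | h1
        · exact hwW (h1 ▸ (hFW e h).1)
        · exact hwW (h1 ▸ (hFW e h).2)
      obtain ⟨W₁, W₂, rfl⟩ := List.append_of_mem huW
      set W' := W₁ ++ u :: w :: u :: W₂ with hW'
      have hmemW' : ∀ y, y ∈ W₁ ++ u :: W₂ → y ∈ W' := by
        intro y hy
        simp only [hW', List.mem_append, List.mem_cons] at hy ⊢
        tauto
      have huW' : u ∈ W' := hmemW' u huW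
      have hwW' : w ∈ W' := by
        simp [hW', List.mem_append, List.mem_cons]
      have hhead' : W'.head? = some r := by
        rw [hW']
        cases W₁ with
        | nil => simpa using hhead
        | cons a t => simpa using hhead
      have hlast' : W'.getLast? = some r := by
        rw [hW', getLast?_append_cons, List.getLast?_cons_cons, List.getLast?_cons_cons]
        rw [getLast?_append_cons] at hlast
        exact hlast
      have hcost' : walkCost W' ≤ 2 * ∑ e' ∈ insert e F, dist e'.1 e'.2 := by
        rw [hW', walkCost_splice, Finset.sum_insert heF, hde]
        have := dist_comm w u
        linarith
      have hFW' : ∀ e' ∈ insert e F, e'.1 ∈ W' ∧ e'.2 ∈ W' := by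
        intro e' he'
        rcases Finset.mem_insert.mp he' with rfl | he'
        · constructor
          · rcases he1 with h | h <;> simp [h, huW', hwW']
          · rcases he2 with h | h <;> simp [h, huW', hwW']
        · exact ⟨hmemW' _ (hFW e' he').1, hmemW' _ (hFW e' he').2⟩
      have hcard' : ((Es.image Prod.fst ∪ Es.image Prod.snd) \ W'.toFinset).card ≤ m := by
        have hsub : (Es.image Prod.fst ∪ Es.image Prod.snd) \ W'.toFinset ⊆
            ((Es.image Prod.fst ∪ Es.image Prod.snd) \ (W₁ ++ u :: W₂).toFinset).erase w := by
          intro y hy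
          rw [Finset.mem_sdiff] at hy
          rw [Finset.mem_erase, Finset.mem_sdiff]
          refine ⟨?_, hy.1, ?_⟩
          · rintro rfl
            exact hy.2 (List.mem_toFinset.mpr hwW')
          · intro hyW
            exact hy.2 (List.mem_toFinset.mpr (hmemW' y (List.mem_toFinset.mp hyW)))
        have hwmem : w ∈ (Es.image Prod.fst ∪ Es.image Prod.snd) \ (W₁ ++ u :: W₂).toFinset :=
          Finset.mem_sdiff.mpr ⟨hwVs, fun h => hwW (List.mem_toFinset.mp h)⟩
        have h1 := Finset.card_le_card hsub
        have h2 := Finset.card_erase_of_mem hwmem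
        have h3 := Finset.card_pos.mpr ⟨w, hwmem⟩
        omega
      exact ih W' (insert e F) hhead' hlast' (Finset.insert_subset heEs hFEs) hFW' hcost' hcard'

/-- For the metric Steiner tree problem with root `r` and client
set `D`, the cost shares `ξ(D,x) = (1/2)·d((D ∪ {r}) \ {x}, x)` are
competitive: their sum over `x ∈ D` is at most the cost of any connected
subgraph `Es` spanning `D ∪ {r}` (in particular, at most the cost of the
minimum-cost Steiner tree on `D ∪ {r}`). -/
theorem steiner_cost_shares_competitive
    {V : Type*} [MetricSpace V] [DecidableEq V]
    (r : V) (D : Finset V)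
    (Es : Finset (V × V))
    (hconn : ∀ x ∈ (insert r D : Finset V), ∀ y ∈ (insert r D : Finset V),
      Relation.ReflTransGen (fun u v => (u, v) ∈ Es ∨ (v, u) ∈ Es) x y) :
    ∑ x ∈ D, (1 / 2 : ℝ) * Metric.infDist x (↑((insert r D).erase x) : Set V)
      ≤ ∑ e ∈ Es, dist e.1 e.2 := by
  set S : Finset V := insert r D with hS
  have hsumE : (0 : ℝ) ≤ ∑ e ∈ Es, dist e.1 e.2 :=
    Finset.sum_nonneg fun _ _ => dist_nonneg
  by_cases hD : (D.erase r).Nonempty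
  · -- build the walk
    have hc : ∀ x ∈ S, Relation.ReflTransGen (fun u v => (u, v) ∈ Es ∨ (v, u) ∈ Es) r x :=
      fun x hx => hconn r (Finset.mem_insert_self r D) x hx
    obtain ⟨W', hhead, hlast, hcov, hcost⟩ := grow Es S r hc
      ((Es.image Prod.fst ∪ Es.image Prod.snd).card) [r] ∅
      rfl rfl (Finset.empty_subset _) (by simp) (by simp)
      (Finset.card_le_card (Finset.sdiff_subset))
    obtain ⟨L, rfl⟩ : ∃ L, W' = r :: L := by
      cases W' with
      | nil => simp at hhead
      | cons a t => simp at hhead; exact ⟨t, by rw [hhead]⟩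
    have key := lemE S r L r (D.erase r) r (Finset.mem_insert_self r D)
      (Finset.notMem_erase _ _) (Finset.notMem_erase _ _)
      (fun x hx => Finset.mem_insert_of_mem (Finset.mem_of_mem_erase hx))
      (fun x hx => by
        have hxS : x ∈ S := Finset.mem_insert_of_mem (Finset.mem_of_mem_erase hx)
        have := hcov x hxS
        simp only [List.mem_cons] at this
        rcases this with h | h
        · exact absurd h (Finset.mem_erase.mp hx).1
        · exact h)
      (Or.inr hD) hlast
    rw [dist_self] at key
    have hsplit : ∑ x ∈ D, Metric.infDist x (↑(S.erase x) : Set V)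
        ≤ ∑ x ∈ D.erase r, Metric.infDist x (↑(S.erase x) : Set V)
          + Metric.infDist r (↑(S.erase r) : Set V) := by
      by_cases hr : r ∈ D
      · rw [Finset.sum_erase_add D _ hr]
      · rw [Finset.erase_eq_of_notMem hr]
        have := Metric.infDist_nonneg (x := r) (s := (↑(S.erase r) : Set V))
        linarith
    have h2 : ∑ x ∈ D, (1 / 2 : ℝ) * Metric.infDist x (↑(S.erase x) : Set V)
        = (1 / 2 : ℝ) * ∑ x ∈ D, Metric.infDist x (↑(S.erase x) : Set V) := by
      rw [Finset.mul_sum]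
    rw [h2]
    linarith
  · -- D ⊆ {r}
    have hall : ∀ x ∈ D, x = r := by
      intro x hx
      by_contra hne
      exact hD ⟨x, Finset.mem_erase.mpr ⟨hne, hx⟩⟩
    have : ∑ x ∈ D, (1 / 2 : ℝ) * Metric.infDist x (↑(S.erase x) : Set V) = 0 := by
      apply Finset.sum_eq_zero
      intro x hx
      have hxr := hall x hx
      subst hxr
      have hEe : S.erase x = ∅ := by
        apply Finset.eq_empty_of_forall_notMem
        intro y hy
        obtain ⟨hyx, hyS⟩ := Finset.mem_erase.mp hy
        rcases Finset.mem_insert.mp hyS with h | h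
        · exact hyx h
        · exact hyx (hall y h)
      rw [hEe]
      simp
    linarith
end

section
/- I.i.d. information gap bound: if the ex-post cost-minimization problem of a Bayesian network design game admits an α-approximation algorithm 𝒜 and an augmentation algorithm ℬ with a β-strict, competitive cost-sharing scheme ξ, then when all n players' types are drawn i.i.d. from ρ, the information gap is at most α + β; i.e., there exist Bayesian strategies s with K(s) ≤ (α+β)·E_{R∼ρⁿ}[c(OPT(R))]. -/
open Finset

lemma my_sum_union_le {E : Type*} [DecidableEq E] (c : E → ℝ) (hc : ∀ e, 0 ≤ c e)
    (s t : Finset E) : ∑ e ∈ s ∪ t, c e ≤ ∑ e ∈ s, c e + ∑ e ∈ t, c e := by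
  have h := Finset.sum_union_inter (s₁ := s) (s₂ := t) (f := c)
  have h2 : (0:ℝ) ≤ ∑ e ∈ s ∩ t, c e := Finset.sum_nonneg fun e _ => hc e
  linarith

lemma my_sum_biUnion_le {ι E : Type*} [DecidableEq ι] [DecidableEq E] (c : E → ℝ)
    (hc : ∀ e, 0 ≤ c e) (s : Finset ι) (f : ι → Finset E) :
    ∑ e ∈ s.biUnion f, c e ≤ ∑ i ∈ s, ∑ e ∈ f i, c e := by
  induction s using Finset.induction_on with
  | empty => simp
  | insert a s ha ih =>
      rw [Finset.biUnion_insert, Finset.sum_insert ha]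
      calc ∑ e ∈ f _ ∪ _, c e ≤ ∑ e ∈ f _, c e + ∑ e ∈ Finset.biUnion _ f, c e :=
            my_sum_union_le c hc _ _
        _ ≤ _ := by linarith

lemma my_sum_split {T : Type*} [Fintype T] {m : ℕ} (i : Fin (m+1)) (f : T → (Fin m → T) → ℝ) :
    ∑ R : Fin (m+1) → T, f (R i) (fun k => R (i.succAbove k))
      = ∑ x : T, ∑ d : Fin m → T, f x d := by
  calc ∑ R : Fin (m+1) → T, f (R i) (fun k => R (i.succAbove k))
      = ∑ p : T × (Fin m → T), f p.1 p.2 :=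
        Fintype.sum_equiv (Fin.insertNthEquiv (fun _ => T) i).symm _ _ (fun R => rfl)
    _ = _ := Fintype.sum_prod_type (fun p => f p.1 p.2)

lemma my_univ_val_map {T : Type*} {m : ℕ} (i : Fin (m+1)) (R : Fin (m+1) → T) :
    (univ.val.map R : Multiset T) = R i ::ₘ (univ.val.map (fun k => R (i.succAbove k))) := by
  rw [Fin.univ_succAbove m i]
  simp only [Finset.cons_val, Multiset.map_cons, Finset.map_val, Multiset.map_map]
  rfl

/-- i.i.d. information gap bound: if the ex-post
cost-minimization problem of a Bayesian network design game admits an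
`α`-approximation algorithm `A` and an augmentation algorithm `B` with a
`β`-strict, competitive cost-sharing scheme `ξ`, then when all `n` players'
types are drawn i.i.d. from `ρ` there exist (feasible) Bayesian strategies
`s` whose expected social cost is at most `(α+β) · E_{R∼ρⁿ}[c(OPT(R))]`;
hence the information gap is at most `α + β`. Client sets are modelled as
multisets of types. -/
theorem iid_information_gap
    {T E : Type*} [Fintype T] [DecidableEq T] [Fintype E] [DecidableEq E]
    (n : ℕ) (ρ : T → ℝ) (hρ0 : ∀ t, 0 ≤ ρ t) (hρ1 : ∑ t, ρ t = 1)
    (c : E → ℝ) (hc : ∀ e, 0 ≤ c e)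
    (Fa : T → Set (Finset E))
    (α β : ℝ) (hα : 0 ≤ α) (hβ : 0 ≤ β)
    (A : Multiset T → Finset E) (B : Finset E → T → Finset E)
    (ξ : Multiset T → T → ℝ) (hξnn : ∀ U x, 0 ≤ ξ U x)
    (optc : Multiset T → ℝ)
    -- optc U is the cost of a minimum-cost feasible solution for client set U
    (hopt : ∀ U : Multiset T, IsLeast
      {x | ∃ S : Finset E, (∀ t ∈ U, ∃ a ∈ Fa t, a ⊆ S) ∧ x = ∑ e ∈ S, c e}
      (optc U))
    -- A is an α-approximation algorithm
    (hAfeas : ∀ U : Multiset T, ∀ t ∈ U, ∃ a ∈ Fa t, a ⊆ A U)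
    (hAapx : ∀ U : Multiset T, ∑ e ∈ A U, c e ≤ α * optc U)
    -- B is an augmentation algorithm
    (hB : ∀ (F : Finset E) (U : Multiset T) (x : T),
      (∀ t ∈ U, ∃ a ∈ Fa t, a ⊆ F) →
      ∀ t ∈ x ::ₘ U, ∃ a ∈ Fa t, a ⊆ F ∪ B F x)
    -- the cost-sharing scheme: zero outside, competitive, β-strict w.r.t. (A,B)
    (hξ0 : ∀ (U : Multiset T) (x : T), x ∉ U → ξ U x = 0)
    (hcomp : ∀ U : Multiset T, (U.map (fun x => ξ U x)).sum ≤ optc U)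
    (hstrict : ∀ (U : Multiset T) (x : T),
      ∑ e ∈ B (A U) x, c e ≤ β * ξ (x ::ₘ U) x) :
    ∃ s : Fin n → T → Finset E,
      (∀ i t, ∃ a ∈ Fa t, a ⊆ s i t) ∧
      (∑ R : Fin n → T, (∏ i, ρ (R i)) *
          ∑ e ∈ Finset.univ.biUnion (fun i => s i (R i)), c e)
        ≤ (α + β) *
            ∑ R : Fin n → T, (∏ i, ρ (R i)) * optc (Finset.univ.val.map R) := by
  classical
  -- basic facts about optc
  have hoptnn : ∀ U, 0 ≤ optc U := by
    intro U
    obtain ⟨S, _, hS⟩ := (hopt U).1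
    rw [hS]; exact Finset.sum_nonneg fun e _ => hc e
  have hoptmono : ∀ (U : Multiset T) (x : T), optc U ≤ optc (x ::ₘ U) := by
    intro U x
    obtain ⟨S, hfeas, hS⟩ := (hopt (x ::ₘ U)).1
    exact (hopt U).2 ⟨S, fun t ht => hfeas t (Multiset.mem_cons_of_mem ht), hS⟩
  have hprodnn : ∀ {k : ℕ} (R : Fin k → T), 0 ≤ ∏ i, ρ (R i) :=
    fun R => Finset.prod_nonneg fun i _ => hρ0 _
  -- the total mass of ρ^k is 1
  have hsum1 : ∀ k : ℕ, ∑ d : Fin k → T, ∏ i, ρ (d i) = 1 := by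
    intro k
    induction k with
    | zero => simp
    | succ k ih =>
        calc ∑ R : Fin (k+1) → T, ∏ i, ρ (R i)
            = ∑ R : Fin (k+1) → T,
                ρ (R 0) * ∏ i, ρ (R ((0 : Fin (k+1)).succAbove i)) :=
              Finset.sum_congr rfl fun R _ =>
                Fin.prod_univ_succAbove (fun i => ρ (R i)) 0
          _ = ∑ x : T, ∑ d : Fin k → T, ρ x * ∏ i, ρ (d i) :=
              my_sum_split 0 (fun x d => ρ x * ∏ i, ρ (d i))
          _ = 1 := by
              simp_rw [← Finset.mul_sum, ih, mul_one, hρ1]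
  -- trivial case n = 0
  obtain _ | m := n
  · refine ⟨fun _ t => A 0 ∪ B (A 0) t, fun i _ => i.elim0, ?_⟩
    simp only [Finset.univ_eq_empty (α := Fin 0), Finset.biUnion_empty, Finset.sum_empty,
      Finset.prod_empty, mul_zero, one_mul, Finset.empty_val, Multiset.map_zero]
    rw [Finset.sum_const_zero]
    exact mul_nonneg (add_nonneg hα hβ)
      (Finset.sum_nonneg fun _ _ => hoptnn _)
  · -- main case n = m + 1
    rcases isEmpty_or_nonempty T with hT | hT
    · exact absurd hρ1 (by simp)
    -- splitting off one coordinate of the ξ-expectation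
    have hWsplit : ∀ (d : Fin m → T) (i : Fin (m+1)),
        ∑ R : Fin (m+1) → T, (∏ k, ρ (R k)) * ξ (R i ::ₘ univ.val.map d) (R i)
          = ∑ x : T, ρ x * ξ (x ::ₘ univ.val.map d) x := by
      intro d i
      calc ∑ R : Fin (m+1) → T, (∏ k, ρ (R k)) * ξ (R i ::ₘ univ.val.map d) (R i)
          = ∑ R : Fin (m+1) → T,
              (ρ (R i) * ∏ k, ρ (R (i.succAbove k))) * ξ (R i ::ₘ univ.val.map d) (R i) :=
            Finset.sum_congr rfl fun R _ => by
              rw [Fin.prod_univ_succAbove (fun k => ρ (R k)) i]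
        _ = ∑ x : T, ∑ d' : Fin m → T,
              (ρ x * ∏ k, ρ (d' k)) * ξ (x ::ₘ univ.val.map d) x :=
            my_sum_split i (fun x d' => (ρ x * ∏ k, ρ (d' k)) * ξ (x ::ₘ univ.val.map d) x)
        _ = ∑ x : T, ∑ d' : Fin m → T,
              (∏ k, ρ (d' k)) * (ρ x * ξ (x ::ₘ univ.val.map d) x) :=
            Finset.sum_congr rfl fun x _ => Finset.sum_congr rfl fun d' _ => by ring
        _ = ∑ x : T, ρ x * ξ (x ::ₘ univ.val.map d) x := by
            simp_rw [← Finset.sum_mul, hsum1 m, one_mul]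
    -- symmetrization: each coordinate contributes the same ξ-expectation
    have K1 : ∀ j : Fin (m+1),
        ∑ V : Fin (m+1) → T, (∏ k, ρ (V k)) * ξ (univ.val.map V) (V j)
          = ∑ x : T, ∑ d : Fin m → T,
              (ρ x * ∏ k, ρ (d k)) * ξ (x ::ₘ univ.val.map d) x := by
      intro j
      calc ∑ V : Fin (m+1) → T, (∏ k, ρ (V k)) * ξ (univ.val.map V) (V j)
          = ∑ V : Fin (m+1) → T,
              (ρ (V j) * ∏ k, ρ (V (j.succAbove k))) *
                ξ (V j ::ₘ univ.val.map (fun k => V (j.succAbove k))) (V j) :=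
            Finset.sum_congr rfl fun V _ => by
              rw [Fin.prod_univ_succAbove (fun k => ρ (V k)) j, my_univ_val_map j V]
        _ = _ := my_sum_split j
              (fun x d => (ρ x * ∏ k, ρ (d k)) * ξ (x ::ₘ univ.val.map d) x)
    -- splitting the optimum-expectation
    have hEsplit :
        ∑ V : Fin (m+1) → T, (∏ k, ρ (V k)) * optc (univ.val.map V)
          = ∑ x : T, ∑ d : Fin m → T,
              (ρ x * ∏ k, ρ (d k)) * optc (x ::ₘ univ.val.map d) := by
      calc ∑ V : Fin (m+1) → T, (∏ k, ρ (V k)) * optc (univ.val.map V)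
          = ∑ V : Fin (m+1) → T,
              (ρ (V 0) * ∏ k, ρ (V ((0 : Fin (m+1)).succAbove k))) *
                optc (V 0 ::ₘ univ.val.map (fun k => V ((0 : Fin (m+1)).succAbove k))) :=
            Finset.sum_congr rfl fun V _ => by
              rw [Fin.prod_univ_succAbove (fun k => ρ (V k)) 0, my_univ_val_map 0 V]
        _ = _ := my_sum_split 0
              (fun x d => (ρ x * ∏ k, ρ (d k)) * optc (x ::ₘ univ.val.map d))
    -- K2 : expected optimum on m samples is at most on m+1 samples
    have K2 : ∑ d : Fin m → T, (∏ k, ρ (d k)) * optc (univ.val.map d)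
        ≤ ∑ V : Fin (m+1) → T, (∏ k, ρ (V k)) * optc (univ.val.map V) := by
      calc ∑ d : Fin m → T, (∏ k, ρ (d k)) * optc (univ.val.map d)
          = ∑ x : T, ρ x * ∑ d : Fin m → T, (∏ k, ρ (d k)) * optc (univ.val.map d) := by
            rw [← Finset.sum_mul, hρ1, one_mul]
        _ ≤ ∑ x : T, ρ x * ∑ d : Fin m → T, (∏ k, ρ (d k)) * optc (x ::ₘ univ.val.map d) :=
            Finset.sum_le_sum fun x _ => mul_le_mul_of_nonneg_left
              (Finset.sum_le_sum fun d _ =>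
                mul_le_mul_of_nonneg_left (hoptmono _ x) (hprodnn d)) (hρ0 x)
        _ = ∑ x : T, ∑ d : Fin m → T, (ρ x * ∏ k, ρ (d k)) * optc (x ::ₘ univ.val.map d) := by
            refine Finset.sum_congr rfl fun x _ => ?_
            rw [Finset.mul_sum]
            exact Finset.sum_congr rfl fun d _ => by ring
        _ = _ := hEsplit.symm
    -- competitiveness in expectation
    have hcompV : ∀ V : Fin (m+1) → T,
        ∑ j : Fin (m+1), ξ (univ.val.map V) (V j) ≤ optc (univ.val.map V) := by
      intro V
      have h := hcomp (univ.val.map V)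
      rw [Multiset.map_map] at h
      simpa [Finset.sum_eq_multiset_sum] using h
    -- K3 : the symmetrized ξ-expectation is at most the optimum-expectation
    have K3 : ((m : ℝ) + 1) *
        (∑ x : T, ∑ d : Fin m → T, (ρ x * ∏ k, ρ (d k)) * ξ (x ::ₘ univ.val.map d) x)
        ≤ ∑ V : Fin (m+1) → T, (∏ k, ρ (V k)) * optc (univ.val.map V) := by
      calc ((m : ℝ) + 1) *
            (∑ x : T, ∑ d : Fin m → T, (ρ x * ∏ k, ρ (d k)) * ξ (x ::ₘ univ.val.map d) x)
          = ∑ _j : Fin (m+1), ∑ x : T, ∑ d : Fin m → T,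
              (ρ x * ∏ k, ρ (d k)) * ξ (x ::ₘ univ.val.map d) x := by
            rw [Finset.sum_const, Finset.card_univ, Fintype.card_fin, nsmul_eq_mul]
            push_cast; ring
        _ = ∑ j : Fin (m+1), ∑ V : Fin (m+1) → T,
              (∏ k, ρ (V k)) * ξ (univ.val.map V) (V j) :=
            Finset.sum_congr rfl fun j _ => (K1 j).symm
        _ = ∑ V : Fin (m+1) → T, ∑ j : Fin (m+1),
              (∏ k, ρ (V k)) * ξ (univ.val.map V) (V j) := Finset.sum_comm
        _ = ∑ V : Fin (m+1) → T,
              (∏ k, ρ (V k)) * ∑ j : Fin (m+1), ξ (univ.val.map V) (V j) :=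
            Finset.sum_congr rfl fun V _ => (Finset.mul_sum _ _ _).symm
        _ ≤ _ := Finset.sum_le_sum fun V _ =>
            mul_le_mul_of_nonneg_left (hcompV V) (hprodnn V)
    -- bound on the expected cost of the strategy built from sample d
    have hGle : ∀ d : Fin m → T,
        (∑ R : Fin (m+1) → T, (∏ i, ρ (R i)) *
            ∑ e ∈ univ.biUnion
              (fun i => A (univ.val.map d) ∪ B (A (univ.val.map d)) (R i)), c e)
        ≤ (∑ e ∈ A (univ.val.map d), c e)
            + β * (((m : ℝ) + 1) * ∑ x : T, ρ x * ξ (x ::ₘ univ.val.map d) x) := by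
      intro d
      have hcost : ∀ R : Fin (m+1) → T,
          ∑ e ∈ univ.biUnion
              (fun i => A (univ.val.map d) ∪ B (A (univ.val.map d)) (R i)), c e
          ≤ (∑ e ∈ A (univ.val.map d), c e)
              + β * ∑ i : Fin (m+1), ξ (R i ::ₘ univ.val.map d) (R i) := by
        intro R
        have hsub : univ.biUnion
              (fun i => A (univ.val.map d) ∪ B (A (univ.val.map d)) (R i))
            ⊆ A (univ.val.map d) ∪
              univ.biUnion (fun i => B (A (univ.val.map d)) (R i)) :=
          Finset.biUnion_subset.mpr fun i _ =>
            Finset.union_subset_union (Finset.Subset.refl _)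
              (Finset.subset_biUnion_of_mem
                (fun i => B (A (univ.val.map d)) (R i)) (Finset.mem_univ i))
        have h1 : ∑ e ∈ univ.biUnion
              (fun i => A (univ.val.map d) ∪ B (A (univ.val.map d)) (R i)), c e
            ≤ ∑ e ∈ A (univ.val.map d) ∪
                univ.biUnion (fun i => B (A (univ.val.map d)) (R i)), c e :=
          Finset.sum_le_sum_of_subset_of_nonneg hsub (fun e _ _ => hc e)
        have h2 := my_sum_union_le c hc (A (univ.val.map d))
          (univ.biUnion (fun i => B (A (univ.val.map d)) (R i)))
        have h3 := my_sum_biUnion_le c hc univ (fun i => B (A (univ.val.map d)) (R i))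
        have h4 : ∑ i : Fin (m+1), ∑ e ∈ B (A (univ.val.map d)) (R i), c e
            ≤ ∑ i : Fin (m+1), β * ξ (R i ::ₘ univ.val.map d) (R i) :=
          Finset.sum_le_sum fun i _ => hstrict (univ.val.map d) (R i)
        have h5 : ∑ i : Fin (m+1), β * ξ (R i ::ₘ univ.val.map d) (R i)
            = β * ∑ i : Fin (m+1), ξ (R i ::ₘ univ.val.map d) (R i) :=
          (Finset.mul_sum _ _ _).symm
        linarith
      calc ∑ R : Fin (m+1) → T, (∏ i, ρ (R i)) *
            ∑ e ∈ univ.biUnion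
              (fun i => A (univ.val.map d) ∪ B (A (univ.val.map d)) (R i)), c e
          ≤ ∑ R : Fin (m+1) → T,
              ((∏ i, ρ (R i)) * (∑ e ∈ A (univ.val.map d), c e)
                + β * ∑ i : Fin (m+1),
                    (∏ k, ρ (R k)) * ξ (R i ::ₘ univ.val.map d) (R i)) := by
            refine Finset.sum_le_sum fun R _ => ?_
            calc (∏ i, ρ (R i)) * ∑ e ∈ univ.biUnion
                  (fun i => A (univ.val.map d) ∪ B (A (univ.val.map d)) (R i)), c e
                ≤ (∏ i, ρ (R i)) * ((∑ e ∈ A (univ.val.map d), c e)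
                    + β * ∑ i : Fin (m+1), ξ (R i ::ₘ univ.val.map d) (R i)) :=
                  mul_le_mul_of_nonneg_left (hcost R) (hprodnn R)
              _ = _ := by rw [mul_add, mul_left_comm, Finset.mul_sum, Finset.mul_sum]
        _ = (∑ R : Fin (m+1) → T, ∏ i, ρ (R i)) * (∑ e ∈ A (univ.val.map d), c e)
              + β * ∑ i : Fin (m+1), ∑ R : Fin (m+1) → T,
                  (∏ k, ρ (R k)) * ξ (R i ::ₘ univ.val.map d) (R i) := by
            rw [Finset.sum_add_distrib, ← Finset.sum_mul, ← Finset.mul_sum,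
              Finset.sum_comm]
        _ = (∑ e ∈ A (univ.val.map d), c e)
              + β * ∑ _i : Fin (m+1), ∑ x : T, ρ x * ξ (x ::ₘ univ.val.map d) x := by
            rw [hsum1 (m+1), one_mul]
            congr 1
            congr 1
            exact Finset.sum_congr rfl fun i _ => hWsplit d i
        _ = _ := by
            rw [Finset.sum_const, Finset.card_univ, Fintype.card_fin, nsmul_eq_mul]
            push_cast; ring
    -- the expected(-over-samples) guarantee
    have main : ∑ d : Fin m → T, (∏ k, ρ (d k)) *
          (∑ R : Fin (m+1) → T, (∏ i, ρ (R i)) *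
            ∑ e ∈ univ.biUnion
              (fun i => A (univ.val.map d) ∪ B (A (univ.val.map d)) (R i)), c e)
        ≤ (α + β) * ∑ V : Fin (m+1) → T, (∏ k, ρ (V k)) * optc (univ.val.map V) := by
      have step1 : ∑ d : Fin m → T, (∏ k, ρ (d k)) *
            (∑ R : Fin (m+1) → T, (∏ i, ρ (R i)) *
              ∑ e ∈ univ.biUnion
                (fun i => A (univ.val.map d) ∪ B (A (univ.val.map d)) (R i)), c e)
          ≤ ∑ d : Fin m → T, (∏ k, ρ (d k)) *
              ((∑ e ∈ A (univ.val.map d), c e)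
                + β * (((m : ℝ) + 1) * ∑ x : T, ρ x * ξ (x ::ₘ univ.val.map d) x)) :=
        Finset.sum_le_sum fun d _ =>
          mul_le_mul_of_nonneg_left (hGle d) (hprodnn d)
      have step2 : ∑ d : Fin m → T, (∏ k, ρ (d k)) *
            ((∑ e ∈ A (univ.val.map d), c e)
              + β * (((m : ℝ) + 1) * ∑ x : T, ρ x * ξ (x ::ₘ univ.val.map d) x))
          ≤ ∑ d : Fin m → T, (∏ k, ρ (d k)) *
            ((α * optc (univ.val.map d))
              + β * (((m : ℝ) + 1) * ∑ x : T, ρ x * ξ (x ::ₘ univ.val.map d) x)) :=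
        Finset.sum_le_sum fun d _ => mul_le_mul_of_nonneg_left
          (add_le_add_left (hAapx (univ.val.map d)) _) (hprodnn d)
      have hsplit3 : ∑ d : Fin m → T, (∏ k, ρ (d k)) *
            ((α * optc (univ.val.map d))
              + β * (((m : ℝ) + 1) * ∑ x : T, ρ x * ξ (x ::ₘ univ.val.map d) x))
          = α * (∑ d : Fin m → T, (∏ k, ρ (d k)) * optc (univ.val.map d))
            + β * (((m : ℝ) + 1) *
              ∑ d : Fin m → T, ∑ x : T,
                ((∏ k, ρ (d k)) * (ρ x * ξ (x ::ₘ univ.val.map d) x))) := by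
        simp_rw [mul_add, Finset.sum_add_distrib, Finset.mul_sum]
        congr 1
        · exact Finset.sum_congr rfl fun d _ => by ring
        · exact Finset.sum_congr rfl fun d _ =>
            Finset.sum_congr rfl fun x _ => by ring
      have hQ : ∑ d : Fin m → T, ∑ x : T,
            ((∏ k, ρ (d k)) * (ρ x * ξ (x ::ₘ univ.val.map d) x))
          = ∑ x : T, ∑ d : Fin m → T,
            (ρ x * ∏ k, ρ (d k)) * ξ (x ::ₘ univ.val.map d) x := by
        rw [Finset.sum_comm]
        exact Finset.sum_congr rfl fun x _ => Finset.sum_congr rfl fun d _ => by ring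
      have hQnn : 0 ≤ ∑ d : Fin m → T, (∏ k, ρ (d k)) * optc (univ.val.map d) :=
        Finset.sum_nonneg fun d _ => mul_nonneg (hprodnn d) (hoptnn _)
      calc _ ≤ _ := step1
        _ ≤ _ := step2
        _ = _ := hsplit3
        _ ≤ α * (∑ V : Fin (m+1) → T, (∏ k, ρ (V k)) * optc (univ.val.map V))
              + β * (∑ V : Fin (m+1) → T, (∏ k, ρ (V k)) * optc (univ.val.map V)) := by
            have h3 := K3
            have hK2 := K2
            have hβ1 : β * (((m : ℝ) + 1) *
                ∑ d : Fin m → T, ∑ x : T,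
                  ((∏ k, ρ (d k)) * (ρ x * ξ (x ::ₘ univ.val.map d) x)))
                ≤ β * ∑ V : Fin (m+1) → T, (∏ k, ρ (V k)) * optc (univ.val.map V) := by
              refine mul_le_mul_of_nonneg_left ?_ hβ
              rw [hQ]; exact h3
            have hα1 : α * (∑ d : Fin m → T, (∏ k, ρ (d k)) * optc (univ.val.map d))
                ≤ α * ∑ V : Fin (m+1) → T, (∏ k, ρ (V k)) * optc (univ.val.map V) :=
              mul_le_mul_of_nonneg_left hK2 hα
            linarith
        _ = _ := by ring
    -- derandomize: pick the best sample d0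
    have hne : (univ : Finset (Fin m → T)).Nonempty := Finset.univ_nonempty
    obtain ⟨d0, _, hd0⟩ := Finset.exists_min_image univ
      (fun d => ∑ R : Fin (m+1) → T, (∏ i, ρ (R i)) *
        ∑ e ∈ univ.biUnion
          (fun i => A (univ.val.map d) ∪ B (A (univ.val.map d)) (R i)), c e) hne
    have hd0le : (∑ R : Fin (m+1) → T, (∏ i, ρ (R i)) *
          ∑ e ∈ univ.biUnion
            (fun i => A (univ.val.map d0) ∪ B (A (univ.val.map d0)) (R i)), c e)
        ≤ (α + β) * ∑ V : Fin (m+1) → T, (∏ k, ρ (V k)) * optc (univ.val.map V) := by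
      calc (∑ R : Fin (m+1) → T, (∏ i, ρ (R i)) *
            ∑ e ∈ univ.biUnion
              (fun i => A (univ.val.map d0) ∪ B (A (univ.val.map d0)) (R i)), c e)
          = ∑ d : Fin m → T, (∏ k, ρ (d k)) *
              (∑ R : Fin (m+1) → T, (∏ i, ρ (R i)) *
                ∑ e ∈ univ.biUnion
                  (fun i => A (univ.val.map d0) ∪ B (A (univ.val.map d0)) (R i)), c e) := by
            rw [← Finset.sum_mul, hsum1 m, one_mul]
        _ ≤ ∑ d : Fin m → T, (∏ k, ρ (d k)) *
              (∑ R : Fin (m+1) → T, (∏ i, ρ (R i)) *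
                ∑ e ∈ univ.biUnion
                  (fun i => A (univ.val.map d) ∪ B (A (univ.val.map d)) (R i)), c e) :=
            Finset.sum_le_sum fun d _ =>
              mul_le_mul_of_nonneg_left (hd0 d (Finset.mem_univ d)) (hprodnn d)
        _ ≤ _ := main
    refine ⟨fun _ t => A (univ.val.map d0) ∪ B (A (univ.val.map d0)) t, ?_, ?_⟩
    · intro i t
      exact hB (A (univ.val.map d0)) (univ.val.map d0) t
        (hAfeas (univ.val.map d0)) t (Multiset.mem_cons_self t _)
    · exact hd0le
end

section
/- Cross-monotone information gap bound: if the ex-post cost-minimization problem admits an α-approximation algorithm 𝒜 and augmentation algorithm ℬ with a β-strict, competitive, cross-monotone cost-sharing scheme ξ (ξ(D, x) is non-increasing in D), then when each player i's type is drawn independently from a possibly different distribution π_i, the information gap is at most α + β. -/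
open Finset


lemma sum_biUnion_le_aux {E ι : Type*} [DecidableEq E] [DecidableEq ι] (s : Finset ι)
    (f : ι → Finset E) (c : E → ℝ) (hc : ∀ e, 0 ≤ c e) :
    ∑ e ∈ s.biUnion f, c e ≤ ∑ i ∈ s, ∑ e ∈ f i, c e := by
  induction s using Finset.induction with
  | empty => simp
  | @insert a s ha ih =>
    rw [Finset.biUnion_insert, Finset.sum_insert ha]
    have h1 : ∑ e ∈ f a ∪ s.biUnion f, c e ≤ ∑ e ∈ f a, c e + ∑ e ∈ s.biUnion f, c e := by
      have := Finset.sum_union_inter (s₁ := f a) (s₂ := s.biUnion f) (f := c)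
      have h2 : 0 ≤ ∑ e ∈ f a ∩ s.biUnion f, c e := Finset.sum_nonneg fun e _ => hc e
      linarith
    linarith

lemma sum_union_le_aux {E : Type*} [DecidableEq E] (s t : Finset E)
    (c : E → ℝ) (hc : ∀ e, 0 ≤ c e) :
    ∑ e ∈ s ∪ t, c e ≤ ∑ e ∈ s, c e + ∑ e ∈ t, c e := by
  have := Finset.sum_union_inter (s₁ := s) (s₂ := t) (f := c)
  have h2 : 0 ≤ ∑ e ∈ s ∩ t, c e := Finset.sum_nonneg fun e _ => hc e
  linarith

-- multiset decomposition
lemma map_univ_eq {T : Type*} {n : ℕ} [DecidableEq (Fin n)] (D : Fin n → T) (i : Fin n) :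
    Finset.univ.val.map D = D i ::ₘ ((Finset.univ.erase i).val.map D) := by
  conv_lhs => rw [← Finset.insert_erase (Finset.mem_univ i)]
  rw [Finset.insert_val_of_notMem (Finset.notMem_erase i _), Multiset.map_cons]

lemma map_univ_update {T : Type*} {n : ℕ} (D : Fin n → T) (i : Fin n) (x : T) :
    Finset.univ.val.map (Function.update D i x) = x ::ₘ ((Finset.univ.erase i).val.map D) := by
  rw [map_univ_eq (Function.update D i x) i, Function.update_self]
  congr 1
  apply Multiset.map_congr rfl
  intro j hj
  have : j ≠ i := by
    have : j ∈ Finset.univ.erase i := hj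
    exact (Finset.mem_erase.mp this).1
  exact Function.update_of_ne this x D

set_option maxHeartbeats 1000000 in
/-- cross-monotone information gap bound: if the ex-post
cost-minimization problem admits an `α`-approximation algorithm `A` and an
augmentation algorithm `B` with a `β`-strict, competitive, cross-monotone
cost-sharing scheme `ξ`, then when each player `i`'s type is drawn
independently from a possibly different distribution `π i`, there exist
(feasible) Bayesian strategies `s` whose expected social cost is at most
`(α+β) · E_{R∼π}[c(OPT(R))]`; hence the information gap is at most `α + β`. -/
theorem cross_monotone_information_gap
    {T E : Type*} [Fintype T] [DecidableEq T] [Fintype E] [DecidableEq E]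
    (n : ℕ) (π : Fin n → T → ℝ)
    (hπ0 : ∀ i t, 0 ≤ π i t) (hπ1 : ∀ i, ∑ t, π i t = 1)
    (c : E → ℝ) (hc : ∀ e, 0 ≤ c e)
    (Fa : T → Set (Finset E))
    (α β : ℝ) (hα : 0 ≤ α) (hβ : 0 ≤ β)
    (A : Multiset T → Finset E) (B : Finset E → T → Finset E)
    (ξ : Multiset T → T → ℝ) (hξnn : ∀ U x, 0 ≤ ξ U x)
    (optc : Multiset T → ℝ)
    (hopt : ∀ U : Multiset T, IsLeast
      {x | ∃ S : Finset E, (∀ t ∈ U, ∃ a ∈ Fa t, a ⊆ S) ∧ x = ∑ e ∈ S, c e}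
      (optc U))
    (hAfeas : ∀ U : Multiset T, ∀ t ∈ U, ∃ a ∈ Fa t, a ⊆ A U)
    (hAapx : ∀ U : Multiset T, ∑ e ∈ A U, c e ≤ α * optc U)
    (hB : ∀ (F : Finset E) (U : Multiset T) (x : T),
      (∀ t ∈ U, ∃ a ∈ Fa t, a ⊆ F) →
      ∀ t ∈ x ::ₘ U, ∃ a ∈ Fa t, a ⊆ F ∪ B F x)
    (hξ0 : ∀ (U : Multiset T) (x : T), x ∉ U → ξ U x = 0)
    (hcomp : ∀ U : Multiset T, (U.map (fun x => ξ U x)).sum ≤ optc U)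
    (hstrict : ∀ (U : Multiset T) (x : T),
      ∑ e ∈ B (A U) x, c e ≤ β * ξ (x ::ₘ U) x)
    -- cross-monotonicity: enlarging the client multiset weakly decreases shares
    (hmono : ∀ (U U' : Multiset T) (x : T), U ≤ U' → x ∈ U → ξ U' x ≤ ξ U x) :
    ∃ s : Fin n → T → Finset E,
      (∀ i t, ∃ a ∈ Fa t, a ⊆ s i t) ∧
      (∑ R : Fin n → T, (∏ i, π i (R i)) *
          ∑ e ∈ Finset.univ.biUnion (fun i => s i (R i)), c e)
        ≤ (α + β) *
            ∑ R : Fin n → T, (∏ i, π i (R i)) * optc (Finset.univ.val.map R) := by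
  classical
  set w : (Fin n → T) → ℝ := fun R => ∏ i, π i (R i) with hw_def
  have hwnn : ∀ R, 0 ≤ w R := fun R => Finset.prod_nonneg fun i _ => hπ0 i (R i)
  have hwsum : ∑ R : Fin n → T, w R = 1 := by
    have h1 : (∏ i : Fin n, ∑ t : T, π i t)
        = ∑ R ∈ Fintype.piFinset (fun _ : Fin n => (Finset.univ : Finset T)),
            ∏ i : Fin n, π i (R i) := Finset.prod_univ_sum _ _
    rw [Fintype.piFinset_univ] at h1
    have h2 : (∏ i : Fin n, ∑ t : T, π i t) = 1 := by
      rw [Finset.prod_congr rfl fun i _ => hπ1 i, Finset.prod_const_one]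
    rw [hw_def, ← h1, h2]
  have hoptnn : ∀ U, 0 ≤ optc U := by
    intro U
    obtain ⟨S, _, hS⟩ := (hopt U).1
    rw [hS]
    exact Finset.sum_nonneg fun e _ => hc e
  -- the deterministic strategy family indexed by a sampled profile D
  have hfeas : ∀ (D : Fin n → T) (t : T), ∃ a ∈ Fa t,
      a ⊆ A (Finset.univ.val.map D) ∪ B (A (Finset.univ.val.map D)) t := by
    intro D t
    exact hB (A (Finset.univ.val.map D)) (Finset.univ.val.map D) t
      (hAfeas (Finset.univ.val.map D)) t (Multiset.mem_cons_self t _)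
  -- pointwise cost bound
  have h2 : ∀ (D R : Fin n → T),
      (∑ e ∈ Finset.univ.biUnion
        (fun i => A (Finset.univ.val.map D) ∪ B (A (Finset.univ.val.map D)) (R i)), c e)
      ≤ α * optc (Finset.univ.val.map D)
        + β * ∑ i, ξ (Finset.univ.val.map (Function.update D i (R i))) (R i) := by
    intro D R
    set F := A (Finset.univ.val.map D) with hF
    have hsub : Finset.univ.biUnion (fun i => F ∪ B F (R i))
        ⊆ F ∪ Finset.univ.biUnion (fun i => B F (R i)) := by
      apply Finset.biUnion_subset.mpr
      intro i _
      exact Finset.union_subset_union_right (Finset.subset_biUnion_of_mem (fun j => B F (R j)) (Finset.mem_univ i))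
    calc (∑ e ∈ Finset.univ.biUnion (fun i => F ∪ B F (R i)), c e)
        ≤ ∑ e ∈ F ∪ Finset.univ.biUnion (fun i => B F (R i)), c e :=
          Finset.sum_le_sum_of_subset_of_nonneg hsub (fun e _ _ => hc e)
      _ ≤ (∑ e ∈ F, c e) + ∑ e ∈ Finset.univ.biUnion (fun i => B F (R i)), c e :=
          sum_union_le_aux _ _ c hc
      _ ≤ (∑ e ∈ F, c e) + ∑ i, ∑ e ∈ B F (R i), c e := by
          exact add_le_add_right (sum_biUnion_le_aux _ _ c hc) _
      _ ≤ α * optc (Finset.univ.val.map D)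
            + ∑ i, β * ξ (R i ::ₘ Finset.univ.val.map D) (R i) := by
          refine add_le_add (hAapx _) (Finset.sum_le_sum fun i _ => ?_)
          exact hstrict (Finset.univ.val.map D) (R i)
      _ ≤ α * optc (Finset.univ.val.map D)
            + β * ∑ i, ξ (Finset.univ.val.map (Function.update D i (R i))) (R i) := by
          rw [Finset.mul_sum]
          refine add_le_add_right (Finset.sum_le_sum fun i _ => ?_) _
          refine mul_le_mul_of_nonneg_left ?_ hβ
          apply hmono
          · rw [map_univ_update, map_univ_eq D i]
            exact Multiset.cons_le_cons _ (Multiset.le_cons_self _ _)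
          · rw [map_univ_update]
            exact Multiset.mem_cons_self _ _
  -- swap (change-of-variables) identity for each coordinate i
  have hkey : ∀ i : Fin n,
      (∑ D : Fin n → T, ∑ R : Fin n → T,
        w D * w R * ξ (Finset.univ.val.map (Function.update D i (R i))) (R i))
      = ∑ D : Fin n → T, w D * ξ (Finset.univ.val.map D) (D i) := by
    intro i
    have hwup : ∀ (D : Fin n → T) (a : T),
        w (Function.update D i a) = π i a * ∏ j ∈ Finset.univ.erase i, π j (D j) := by
      intro D a
      show ∏ j, π j (Function.update D i a j) = _
      have h1 : ∀ j, π j (Function.update D i a j)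
          = Function.update (fun j => π j (D j)) i (π i a) j := by
        intro j
        by_cases hj : j = i
        · subst hj; simp
        · rw [Function.update_of_ne hj, Function.update_of_ne hj]
      rw [Finset.prod_congr rfl (fun j _ => h1 j),
        ← Finset.mul_prod_erase Finset.univ _ (Finset.mem_univ i), Function.update_self]
      congr 1
      refine Finset.prod_congr rfl fun j hj => ?_
      rw [Function.update_of_ne (Finset.mem_erase.mp hj).1]
    have hwsplit : ∀ D : Fin n → T,
        w D = π i (D i) * ∏ j ∈ Finset.univ.erase i, π j (D j) := by
      intro D
      exact (Finset.mul_prod_erase Finset.univ (fun j => π j (D j)) (Finset.mem_univ i)).symm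
    set σ : ((Fin n → T) × (Fin n → T)) → ((Fin n → T) × (Fin n → T)) :=
      fun p => (Function.update p.1 i (p.2 i), Function.update p.2 i (p.1 i)) with hσ
    have hinv : Function.Involutive σ := by
      intro p
      obtain ⟨D, R⟩ := p
      simp only [hσ, Function.update_self]
      rw [Function.update_idem, Function.update_idem, Function.update_eq_self,
        Function.update_eq_self]
    have hswap : (∑ p : (Fin n → T) × (Fin n → T),
          w p.1 * w p.2 * ξ (Finset.univ.val.map (Function.update p.1 i (p.2 i))) (p.2 i))
        = ∑ p : (Fin n → T) × (Fin n → T),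
            w p.1 * w p.2 * ξ (Finset.univ.val.map p.1) (p.1 i) := by
      refine Fintype.sum_bijective σ hinv.bijective _ _ fun p => ?_
      obtain ⟨D, R⟩ := p
      simp only [hσ, Function.update_self]
      congr 1
      rw [hwup D (R i), hwup R (D i), hwsplit D, hwsplit R]
      ring
    have e1 : (∑ D : Fin n → T, ∑ R : Fin n → T,
        w D * w R * ξ (Finset.univ.val.map (Function.update D i (R i))) (R i))
        = ∑ p : (Fin n → T) × (Fin n → T),
            w p.1 * w p.2 * ξ (Finset.univ.val.map (Function.update p.1 i (p.2 i))) (p.2 i) :=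
      (Fintype.sum_prod_type (fun p : (Fin n → T) × (Fin n → T) =>
        w p.1 * w p.2 * ξ (Finset.univ.val.map (Function.update p.1 i (p.2 i))) (p.2 i))).symm
    have e2 : (∑ p : (Fin n → T) × (Fin n → T),
            w p.1 * w p.2 * ξ (Finset.univ.val.map p.1) (p.1 i))
        = ∑ D : Fin n → T, ∑ R : Fin n → T, w D * w R * ξ (Finset.univ.val.map D) (D i) :=
      Fintype.sum_prod_type (fun p : (Fin n → T) × (Fin n → T) =>
        w p.1 * w p.2 * ξ (Finset.univ.val.map p.1) (p.1 i))
    rw [e1, hswap, e2]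
    refine Finset.sum_congr rfl fun D _ => ?_
    calc (∑ R : Fin n → T, w D * w R * ξ (Finset.univ.val.map D) (D i))
        = (w D * ξ (Finset.univ.val.map D) (D i)) * ∑ R : Fin n → T, w R := by
          rw [Finset.mul_sum]
          exact Finset.sum_congr rfl fun R _ => by ring
      _ = w D * ξ (Finset.univ.val.map D) (D i) := by rw [hwsum, mul_one]
  -- competitiveness rewritten over profiles
  have hcompsum : ∀ D : Fin n → T,
      (∑ i, ξ (Finset.univ.val.map D) (D i)) ≤ optc (Finset.univ.val.map D) := by
    intro D
    have h := hcomp (Finset.univ.val.map D)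
    rw [Multiset.map_map] at h
    exact h
  set Φ : ℝ := ∑ R : Fin n → T, w R * optc (Finset.univ.val.map R) with hΦ
  -- per-D expected cost bound
  have hD : ∀ D : Fin n → T,
      (∑ R : Fin n → T, w R * ∑ e ∈ Finset.univ.biUnion
        (fun i => A (Finset.univ.val.map D) ∪ B (A (Finset.univ.val.map D)) (R i)), c e)
      ≤ α * optc (Finset.univ.val.map D)
        + β * ∑ i, ∑ R : Fin n → T,
            w R * ξ (Finset.univ.val.map (Function.update D i (R i))) (R i) := by
    intro D
    calc (∑ R : Fin n → T, w R * ∑ e ∈ Finset.univ.biUnion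
          (fun i => A (Finset.univ.val.map D) ∪ B (A (Finset.univ.val.map D)) (R i)), c e)
        ≤ ∑ R : Fin n → T, w R * (α * optc (Finset.univ.val.map D)
            + β * ∑ i, ξ (Finset.univ.val.map (Function.update D i (R i))) (R i)) :=
          Finset.sum_le_sum fun R _ => mul_le_mul_of_nonneg_left (h2 D R) (hwnn R)
      _ = α * optc (Finset.univ.val.map D)
            + β * ∑ i, ∑ R : Fin n → T,
                w R * ξ (Finset.univ.val.map (Function.update D i (R i))) (R i) := by
          rw [Finset.sum_congr rfl (fun R _ => mul_add (w R) _ _), Finset.sum_add_distrib]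
          congr 1
          · rw [← Finset.sum_mul, hwsum, one_mul]
          · calc (∑ R : Fin n → T, w R * (β * ∑ i, ξ (Finset.univ.val.map
                  (Function.update D i (R i))) (R i)))
                = ∑ R : Fin n → T, ∑ i, β * (w R * ξ (Finset.univ.val.map
                    (Function.update D i (R i))) (R i)) := by
                  refine Finset.sum_congr rfl fun R _ => ?_
                  rw [Finset.mul_sum, Finset.mul_sum]
                  exact Finset.sum_congr rfl fun i _ => by ring
              _ = ∑ i, ∑ R : Fin n → T, β * (w R * ξ (Finset.univ.val.map
                    (Function.update D i (R i))) (R i)) := Finset.sum_comm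
              _ = ∑ i, β * ∑ R : Fin n → T, w R * ξ (Finset.univ.val.map
                    (Function.update D i (R i))) (R i) :=
                  Finset.sum_congr rfl fun i _ => (Finset.mul_sum _ _ _).symm
              _ = β * ∑ i, ∑ R : Fin n → T, w R * ξ (Finset.univ.val.map
                    (Function.update D i (R i))) (R i) := (Finset.mul_sum _ _ _).symm
  -- average over D
  have hmain : (∑ D : Fin n → T, w D * ∑ R : Fin n → T,
      w R * ∑ e ∈ Finset.univ.biUnion
        (fun i => A (Finset.univ.val.map D) ∪ B (A (Finset.univ.val.map D)) (R i)), c e)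
      ≤ (α + β) * Φ := by
    calc (∑ D : Fin n → T, w D * ∑ R : Fin n → T,
        w R * ∑ e ∈ Finset.univ.biUnion
          (fun i => A (Finset.univ.val.map D) ∪ B (A (Finset.univ.val.map D)) (R i)), c e)
        ≤ ∑ D : Fin n → T, w D * (α * optc (Finset.univ.val.map D)
            + β * ∑ i, ∑ R : Fin n → T,
                w R * ξ (Finset.univ.val.map (Function.update D i (R i))) (R i)) :=
          Finset.sum_le_sum fun D _ => mul_le_mul_of_nonneg_left (hD D) (hwnn D)
      _ = α * Φ + β * ∑ i, ∑ D : Fin n → T, ∑ R : Fin n → T,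
            w D * w R * ξ (Finset.univ.val.map (Function.update D i (R i))) (R i) := by
          rw [Finset.sum_congr rfl (fun D _ => mul_add (w D) _ _), Finset.sum_add_distrib]
          congr 1
          · rw [hΦ, Finset.mul_sum]
            exact Finset.sum_congr rfl fun D _ => by ring
          · calc (∑ D : Fin n → T, w D * (β * ∑ i, ∑ R : Fin n → T,
                  w R * ξ (Finset.univ.val.map (Function.update D i (R i))) (R i)))
                = ∑ D : Fin n → T, ∑ i, β * ∑ R : Fin n → T,
                    w D * w R * ξ (Finset.univ.val.map (Function.update D i (R i))) (R i) := by
                  refine Finset.sum_congr rfl fun D _ => ?_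
                  rw [Finset.mul_sum, Finset.mul_sum]
                  refine Finset.sum_congr rfl fun i _ => ?_
                  rw [Finset.mul_sum, Finset.mul_sum, Finset.mul_sum]
                  exact Finset.sum_congr rfl fun R _ => by ring
              _ = ∑ i, ∑ D : Fin n → T, β * ∑ R : Fin n → T,
                    w D * w R * ξ (Finset.univ.val.map (Function.update D i (R i))) (R i) :=
                  Finset.sum_comm
              _ = ∑ i, β * ∑ D : Fin n → T, ∑ R : Fin n → T,
                    w D * w R * ξ (Finset.univ.val.map (Function.update D i (R i))) (R i) :=
                  Finset.sum_congr rfl fun i _ => (Finset.mul_sum _ _ _).symm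
              _ = β * ∑ i, ∑ D : Fin n → T, ∑ R : Fin n → T,
                    w D * w R * ξ (Finset.univ.val.map (Function.update D i (R i))) (R i) :=
                  (Finset.mul_sum _ _ _).symm
      _ = α * Φ + β * ∑ i, ∑ D : Fin n → T, w D * ξ (Finset.univ.val.map D) (D i) := by
          congr 1
          rw [Finset.sum_congr rfl fun i _ => hkey i]
      _ ≤ α * Φ + β * Φ := by
          refine add_le_add_right (mul_le_mul_of_nonneg_left ?_ hβ) _
          calc (∑ i, ∑ D : Fin n → T, w D * ξ (Finset.univ.val.map D) (D i))
              = ∑ D : Fin n → T, w D * ∑ i, ξ (Finset.univ.val.map D) (D i) := by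
                rw [Finset.sum_comm]
                exact Finset.sum_congr rfl fun D _ => (Finset.mul_sum _ _ _).symm
            _ ≤ ∑ D : Fin n → T, w D * optc (Finset.univ.val.map D) :=
                Finset.sum_le_sum fun D _ =>
                  mul_le_mul_of_nonneg_left (hcompsum D) (hwnn D)
            _ = Φ := rfl
      _ = (α + β) * Φ := by ring
  -- extract a good deterministic sample D₀
  have hex : ∃ D : Fin n → T,
      (∑ R : Fin n → T, w R * ∑ e ∈ Finset.univ.biUnion
        (fun i => A (Finset.univ.val.map D) ∪ B (A (Finset.univ.val.map D)) (R i)), c e)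
      ≤ (α + β) * Φ := by
    by_contra hcon
    push_neg at hcon
    have h0 : ∃ D : Fin n → T, 0 < w D := by
      by_contra h'
      push_neg at h'
      have : ∑ D : Fin n → T, w D = 0 :=
        Finset.sum_eq_zero fun D _ => le_antisymm (h' D) (hwnn D)
      rw [hwsum] at this
      norm_num at this
    obtain ⟨D₀, hD₀⟩ := h0
    have hlt : (∑ D : Fin n → T, w D * ((α + β) * Φ))
        < ∑ D : Fin n → T, w D * ∑ R : Fin n → T,
            w R * ∑ e ∈ Finset.univ.biUnion
              (fun i => A (Finset.univ.val.map D) ∪ B (A (Finset.univ.val.map D)) (R i)), c e :=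
      Finset.sum_lt_sum
        (fun D _ => mul_le_mul_of_nonneg_left (le_of_lt (hcon D)) (hwnn D))
        ⟨D₀, Finset.mem_univ _, mul_lt_mul_of_pos_left (hcon D₀) hD₀⟩
    rw [← Finset.sum_mul, hwsum, one_mul] at hlt
    exact absurd (lt_of_lt_of_le hlt hmain) (lt_irrefl _)
  obtain ⟨D₀, hD₀⟩ := hex
  refine ⟨fun _ t => A (Finset.univ.val.map D₀) ∪ B (A (Finset.univ.val.map D₀)) t,
    fun i t => hfeas D₀ t, hD₀⟩
end

section
/- The Bayesian price of stability is at most the information gap times μ/λ, and in particular whenever the information gap is finite and Φ is (1, H_n)-close to C, the Bayesian price of stability of a Bayesian network design game with i.i.d. types admitting a β-strict α-approximate cost-sharing scheme is at most (α+β)·H_n = O(log n). -/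
open Finset

/-- Fair cost-sharing player cost: player `i` pays, for each element of its
chosen set, the element cost divided by the number of players using it. -/
noncomputable def playerCost {E : Type*} [DecidableEq E] {n : ℕ} (c : E → ℝ)
    (a : Fin n → Finset E) (i : Fin n) : ℝ :=
  ∑ e ∈ a i, c e / ((univ.filter (fun j : Fin n => e ∈ a j)).card : ℝ)

set_option linter.unusedSectionVars false
set_option linter.unusedVariables false
set_option maxHeartbeats 4000000

namespace BPoSAux

noncomputable def Hs (k : ℕ) : ℝ := ∑ j ∈ Finset.range k, (1 : ℝ) / (j + 1)

lemma Hs_nonneg (k : ℕ) : 0 ≤ Hs k := by unfold Hs; positivity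

lemma Hs_succ (k : ℕ) : Hs (k + 1) = Hs k + 1 / (k + 1) := by
  unfold Hs; rw [Finset.sum_range_succ]

lemma Hs_mono : Monotone Hs := by
  intro a b hab
  induction b with
  | zero => simp at hab; simp [hab]
  | succ b ih =>
    rcases Nat.lt_or_ge a (b+1) with h | h
    · rw [Hs_succ]
      have h2 : (0:ℝ) ≤ 1 / (b + 1) := by positivity
      linarith [ih (Nat.lt_succ_iff.mp h)]
    · have : a = b + 1 := le_antisymm hab h
      simp [this]

lemma one_le_Hs {k : ℕ} (hk : 1 ≤ k) : 1 ≤ Hs k := by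
  have := Hs_mono hk
  simpa [Hs] using this

section Potential
variable {E : Type*} [Fintype E] [DecidableEq E] {n : ℕ}

def nuse (a : Fin n → Finset E) (e : E) : ℕ := (univ.filter (fun j : Fin n => e ∈ a j)).card

lemma nuse_le (a : Fin n → Finset E) (e : E) : nuse a e ≤ n := by
  classical
  calc nuse a e ≤ (univ : Finset (Fin n)).card := Finset.card_filter_le _ _
  _ = n := by simp

lemma nuse_eq_sum (a : Fin n → Finset E) (e : E) :
    nuse a e = ∑ j : Fin n, (if e ∈ a j then 1 else 0) := by
  classical
  unfold nuse
  rw [Finset.card_filter]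

lemma playerCost_eq (c : E → ℝ) (a : Fin n → Finset E) (i : Fin n) :
    playerCost c a i = ∑ e : E, (if e ∈ a i then c e / (nuse a e : ℝ) else 0) := by
  classical
  unfold playerCost nuse
  rw [Finset.sum_ite_mem, Finset.univ_inter]

noncomputable def pot (c : E → ℝ) (a : Fin n → Finset E) : ℝ :=
  ∑ e : E, c e * Hs (nuse a e)

lemma socialCost_eq (c : E → ℝ) (a : Fin n → Finset E) :
    ∑ i, playerCost c a i = ∑ e : E, (if nuse a e = 0 then 0 else c e) := by
  classical
  simp only [playerCost_eq]
  rw [Finset.sum_comm]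
  refine Finset.sum_congr rfl (fun e _ => ?_)
  rcases eq_or_ne (nuse a e) 0 with h | h
  · have : ∀ i : Fin n, e ∉ a i := by
      intro i hi
      have hmem : i ∈ univ.filter (fun j : Fin n => e ∈ a j) := by simp [hi]
      have hp := Finset.card_pos.mpr ⟨i, hmem⟩
      unfold nuse at h
      omega
    simp [this, h]
  · rw [Finset.sum_ite, Finset.sum_const_zero]
    have hcard : (univ.filter (fun j : Fin n => e ∈ a j)).card = nuse a e := rfl
    simp only [Finset.sum_const, hcard, nsmul_eq_mul, add_zero]
    rw [if_neg h]
    field_simp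

lemma cost_le_pot (c : E → ℝ) (hc : ∀ e, 0 ≤ c e) (a : Fin n → Finset E) :
    ∑ i, playerCost c a i ≤ pot c a := by
  rw [socialCost_eq]
  unfold pot
  refine Finset.sum_le_sum (fun e _ => ?_)
  rcases eq_or_ne (nuse a e) 0 with h | h
  · simp only [h, if_pos rfl]
    have : Hs 0 = 0 := by simp [Hs]
    simp [this]
  · rw [if_neg h]
    have h1 : 1 ≤ Hs (nuse a e) := one_le_Hs (by omega)
    nlinarith [hc e]

lemma pot_le_cost (c : E → ℝ) (hc : ∀ e, 0 ≤ c e) (a : Fin n → Finset E) :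
    pot c a ≤ Hs n * ∑ i, playerCost c a i := by
  rw [socialCost_eq]
  unfold pot
  rw [Finset.mul_sum]
  refine Finset.sum_le_sum (fun e _ => ?_)
  rcases eq_or_ne (nuse a e) 0 with h | h
  · simp [h, Hs]
  · rw [if_neg h]
    have h1 : Hs (nuse a e) ≤ Hs n := Hs_mono (nuse_le a e)
    nlinarith [hc e]

lemma nuse_split (a : Fin n → Finset E) (e : E) (i : Fin n) :
    nuse a e = (if e ∈ a i then 1 else 0) + ∑ j ∈ univ.erase i, (if e ∈ a j then 1 else 0) := by
  rw [nuse_eq_sum, ← Finset.add_sum_erase _ _ (Finset.mem_univ i)]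

lemma exact_potential (c : E → ℝ) (a : Fin n → Finset E) (i : Fin n) (b : Finset E) :
    pot c (Function.update a i b) - pot c a
      = playerCost c (Function.update a i b) i - playerCost c a i := by
  classical
  set a' := Function.update a i b with ha'
  have ha'i : a' i = b := Function.update_self i b a
  have hoff : ∀ j ∈ univ.erase i, a' j = a j := by
    intro j hj
    exact Function.update_of_ne (Finset.mem_erase.mp hj).1 b a
  unfold pot
  rw [playerCost_eq, playerCost_eq, ← Finset.sum_sub_distrib, ← Finset.sum_sub_distrib]
  refine Finset.sum_congr rfl (fun e _ => ?_)
  set m : ℕ := ∑ j ∈ univ.erase i, (if e ∈ a j then 1 else 0) with hm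
  have hma : nuse a e = (if e ∈ a i then 1 else 0) + m := nuse_split a e i
  have hma' : nuse a' e = (if e ∈ b then 1 else 0) + m := by
    rw [nuse_split a' e i, ha'i, hm]
    congr 1
    exact Finset.sum_congr rfl (fun j hj => by rw [hoff j hj])
  rw [ha'i]
  by_cases h1 : e ∈ a i <;> by_cases h2 : e ∈ b <;>
    simp only [h1, h2, if_true, if_false, hma, hma']
  · ring
  · rw [show (1:ℕ) + m = m + 1 by omega]
    rw [Hs_succ]
    push_cast
    ring
  · rw [show (1:ℕ) + m = m + 1 by omega]
    rw [Hs_succ]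
    push_cast
    ring
  · ring

/-- The Bayesian-game exact potential identity at the level of strategies. -/
lemma strategy_pot_diff {T : Type*} [Fintype T] [DecidableEq T]
    (ρ : T → ℝ) (c : E → ℝ) (s : Fin n → T → Finset E) (i : Fin n) (ti : T) (a' : Finset E) :
    (∑ R : Fin n → T, (∏ j, ρ (R j)) *
        pot c (fun j => Function.update s i (Function.update (s i) ti a') j (R j)))
      - ∑ R : Fin n → T, (∏ j, ρ (R j)) * pot c (fun j => s j (R j))
    = ∑ R : Fin n → T, (if R i = ti then (∏ j, ρ (R j)) *
        (playerCost c (Function.update (fun j => s j (R j)) i a') i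
          - playerCost c (fun j => s j (R j)) i) else 0) := by
  classical
  rw [← Finset.sum_sub_distrib]
  refine Finset.sum_congr rfl (fun R _ => ?_)
  rcases eq_or_ne (R i) ti with hR | hR
  · rw [if_pos hR]
    have hprof : (fun j => Function.update s i (Function.update (s i) ti a') j (R j))
        = Function.update (fun j => s j (R j)) i a' := by
      funext j
      by_cases hj : j = i
      · subst hj
        rw [Function.update_self, Function.update_self, hR, Function.update_self]
      · rw [Function.update_of_ne hj, Function.update_of_ne hj]
    rw [hprof, ← mul_sub]
    congr 1
    exact exact_potential c (fun j => s j (R j)) i a'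
  · rw [if_neg hR]
    have hprof : (fun j => Function.update s i (Function.update (s i) ti a') j (R j))
        = (fun j => s j (R j)) := by
      funext j
      by_cases hj : j = i
      · subst hj
        rw [Function.update_self, Function.update_of_ne hR]
      · rw [Function.update_of_ne hj]
    rw [hprof, sub_self]

end Potential

section Prob
variable {ι T : Type*} [Fintype ι] [DecidableEq ι] [Fintype T] [DecidableEq T]
variable (ρ : T → ℝ)

lemma sumP (hρ1 : ∑ t, ρ t = 1) : ∑ R : ι → T, ∏ j, ρ (R j) = 1 := by
  have := Finset.prod_univ_sum (fun _ : ι => (univ : Finset T)) (fun _ x => ρ x)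
  rw [Fintype.piFinset_univ] at this
  simp [hρ1] at this
  exact this.symm

lemma fiber_indep (i : ι) (x t : T) (h : (ι → T) → ℝ)
    (hinv : ∀ R y, h (Function.update R i y) = h R) :
    ∑ R : ι → T, (if R i = x then h R else 0) = ∑ R : ι → T, (if R i = t then h R else 0) := by
  classical
  set σ := Equiv.swap x t with hσ
  have hφ : Function.Bijective (fun R : ι → T => Function.update R i (σ (R i))) := by
    apply Function.Involutive.bijective
    intro R
    funext j
    by_cases hj : j = i
    · subst hj
      simp [hσ, Equiv.swap_apply_self]
    · simp [Function.update_of_ne hj]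
  refine Fintype.sum_bijective _ hφ _ _ (fun R => ?_)
  have hupdi : (Function.update R i (σ (R i))) i = σ (R i) := Function.update_self i _ R
  have hcond : (σ (R i) = t) ↔ (R i = x) := by
    constructor
    · intro hc
      have : σ (R i) = σ x := by rw [hc, hσ, Equiv.swap_apply_left]
      exact σ.injective this
    · intro hc
      rw [hc, hσ, Equiv.swap_apply_left]
  rcases eq_or_ne (R i) x with hx | hx
  · rw [if_pos hx, if_pos (by rw [hupdi]; exact hcond.mpr hx), hinv]
  · rw [if_neg hx, if_neg (by rw [hupdi]; exact fun hcon => hx (hcond.mp hcon))]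

lemma fiber_sum (hρ1 : ∑ t, ρ t = 1) (i : ι) (t : T) (h : (ι → T) → ℝ)
    (hinv : ∀ R y, h (Function.update R i y) = h R) :
    ∑ R : ι → T, ρ (R i) * h R = ∑ R : ι → T, (if R i = t then h R else 0) := by
  classical
  have step1 : ∀ R : ι → T, ρ (R i) * h R = ∑ x : T, (if R i = x then ρ x * h R else 0) := by
    intro R
    simp
  simp_rw [step1]
  rw [Finset.sum_comm]
  have step2 : ∀ x : T, ∑ R : ι → T, (if R i = x then ρ x * h R else 0)
      = ρ x * ∑ R : ι → T, (if R i = t then h R else 0) := by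
    intro x
    rw [← fiber_indep i x t h hinv, Finset.mul_sum]
    refine Finset.sum_congr rfl (fun R _ => ?_)
    split <;> simp
  simp_rw [step2]
  rw [← Finset.sum_mul, hρ1, one_mul]

lemma star_lemma (hρ1 : ∑ t, ρ t = 1) (i : ι) (t : T) (f : (ι → T) → ℝ) :
    ρ t * ∑ R : ι → T, (∏ j, ρ (R j)) * f (Function.update R i t)
      = ∑ R : ι → T, (if R i = t then (∏ j, ρ (R j)) * f R else 0) := by
  classical
  set h : (ι → T) → ℝ := fun R => (∏ j ∈ univ.erase i, ρ (R j)) * f (Function.update R i t) with hh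
  have hinv : ∀ R y, h (Function.update R i y) = h R := by
    intro R y
    simp only [hh]
    congr 1
    · exact Finset.prod_congr rfl (fun j hj => by
        rw [Function.update_of_ne (Finset.mem_erase.mp hj).1])
    · rw [Function.update_idem]
  have lhs : ∀ R : ι → T, (∏ j, ρ (R j)) * f (Function.update R i t) = ρ (R i) * h R := by
    intro R
    rw [hh, ← Finset.mul_prod_erase univ _ (Finset.mem_univ i), mul_assoc]
  have rhs : ∀ R : ι → T, (if R i = t then (∏ j, ρ (R j)) * f R else 0)
      = ρ t * (if R i = t then h R else 0) := by
    intro R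
    rcases eq_or_ne (R i) t with hR | hR
    · rw [if_pos hR, if_pos hR]
      have hupd : Function.update R i t = R := by rw [← hR, Function.update_eq_self]
      simp only [hh]
      rw [hupd, ← Finset.mul_prod_erase univ (fun j => ρ (R j)) (Finset.mem_univ i), hR]
      ring
    · rw [if_neg hR, if_neg hR, mul_zero]
  simp_rw [lhs, rhs]
  rw [← Finset.mul_sum, fiber_sum ρ hρ1 i t h hinv, Finset.mul_sum]

lemma marg (hρ1 : ∑ t, ρ t = 1) (i : ι) (g : T → ℝ) :
    ∑ R : ι → T, (∏ j, ρ (R j)) * g (R i) = ∑ x, ρ x * g x := by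
  classical
  set h : (ι → T) → ℝ := fun R => ∏ j ∈ univ.erase i, ρ (R j) with hh
  have hinv : ∀ R y, h (Function.update R i y) = h R := by
    intro R y
    exact Finset.prod_congr rfl (fun j hj => by
      rw [Function.update_of_ne (Finset.mem_erase.mp hj).1])
  have hsplit : ∀ R : ι → T, (∏ j, ρ (R j)) = ρ (R i) * h R := by
    intro R
    rw [hh, ← Finset.mul_prod_erase univ _ (Finset.mem_univ i)]
  have key : ∀ x : T, ∑ R : ι → T, (if R i = x then h R else 0) = 1 := by
    intro x
    have h1 : ∑ R : ι → T, ρ (R i) * h R = ∑ R : ι → T, (if R i = x then h R else 0) :=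
      fiber_sum ρ hρ1 i x h hinv
    have h2 : ∑ R : ι → T, ρ (R i) * h R = 1 := by
      rw [← sumP ρ hρ1 (ι := ι)]
      exact Finset.sum_congr rfl (fun R _ => (hsplit R).symm)
    rw [← h1, h2]
  have expand : ∀ R : ι → T, (∏ j, ρ (R j)) * g (R i)
      = ∑ x : T, (if R i = x then ρ x * h R * g x else 0) := by
    intro R
    have e1 : (∑ x : T, (if R i = x then ρ x * h R * g x else 0)) = ρ (R i) * h R * g (R i) := by
      simp
    rw [e1, hsplit R]
  simp_rw [expand]
  rw [Finset.sum_comm]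
  refine Finset.sum_congr rfl (fun x _ => ?_)
  have : ∀ R : ι → T, (if R i = x then ρ x * h R * g x else 0)
      = (ρ x * g x) * (if R i = x then h R else 0) := by
    intro R
    split <;> ring
  simp_rw [this]
  rw [← Finset.mul_sum, key x, mul_one]

end Prob
end BPoSAux

/-- Combining the Bayesian potential method (BPoS ≤ (μ/λ)·IG),
the `(1, H_n)`-closeness of Rosenthal's potential to the social cost in fair
cost-sharing games, and the i.i.d. information gap bound `IG ≤ α + β` under an
`α`-approximation algorithm with a `β`-strict competitive cost-sharing scheme:
a Bayesian network design game with i.i.d. types admits a Bayes-Nash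
equilibrium `s` with expected social cost `K(s) ≤ (α+β)·H_n·E_t[OPT(t)]`,
i.e. its Bayesian price of stability is at most `(α+β)·H_n = O(log n)`. -/
theorem bayesian_price_of_stability_network_design
    {T E : Type*} [Fintype T] [DecidableEq T] [Fintype E] [DecidableEq E]
    (n : ℕ) (ρ : T → ℝ) (hρ0 : ∀ t, 0 ≤ ρ t) (hρ1 : ∑ t, ρ t = 1)
    (c : E → ℝ) (hc : ∀ e, 0 ≤ c e)
    (Fa : T → Set (Finset E))
    -- feasible actions are upward closed (supersets of feasible sets are feasible)
    (hup : ∀ (t : T) (a b : Finset E), a ∈ Fa t → a ⊆ b → b ∈ Fa t)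
    (α β : ℝ) (hα : 0 ≤ α) (hβ : 0 ≤ β)
    (A : Multiset T → Finset E) (B : Finset E → T → Finset E)
    (ξ : Multiset T → T → ℝ) (hξnn : ∀ U x, 0 ≤ ξ U x)
    (optc : Multiset T → ℝ)
    -- optc U is the minimum cost of a feasible solution for client set U
    (hopt : ∀ U : Multiset T, IsLeast
      {x | ∃ S : Finset E, (∀ t ∈ U, ∃ a ∈ Fa t, a ⊆ S) ∧ x = ∑ e ∈ S, c e}
      (optc U))
    (hAfeas : ∀ U : Multiset T, ∀ t ∈ U, ∃ a ∈ Fa t, a ⊆ A U)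
    (hAapx : ∀ U : Multiset T, ∑ e ∈ A U, c e ≤ α * optc U)
    (hB : ∀ (F : Finset E) (U : Multiset T) (x : T),
      (∀ t ∈ U, ∃ a ∈ Fa t, a ⊆ F) →
      ∀ t ∈ x ::ₘ U, ∃ a ∈ Fa t, a ⊆ F ∪ B F x)
    (hξ0 : ∀ (U : Multiset T) (x : T), x ∉ U → ξ U x = 0)
    (hcomp : ∀ U : Multiset T, (U.map (fun x => ξ U x)).sum ≤ optc U)
    (hstrict : ∀ (U : Multiset T) (x : T),
      ∑ e ∈ B (A U) x, c e ≤ β * ξ (x ::ₘ U) x)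
    -- expected ex-post optimal social cost, assumed positive
    (EOPT : ℝ)
    (hEOPTdef : EOPT = ∑ R : Fin n → T, (∏ i, ρ (R i)) * optc (Finset.univ.val.map R))
    (hEOPT : 0 < EOPT) :
    ∃ s : Fin n → T → Finset E,
      (∀ i t, s i t ∈ Fa t) ∧
      -- s is a Bayes-Nash equilibrium
      (∀ (i : Fin n) (ti : T) (a' : Finset E), a' ∈ Fa ti →
        (∑ R : Fin n → T, (∏ j, ρ (R j)) *
            playerCost c (fun j => s j (Function.update R i ti j)) i)
          ≤ ∑ R : Fin n → T, (∏ j, ρ (R j)) *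
              playerCost c
                (Function.update (fun j => s j (Function.update R i ti j)) i a') i) ∧
      -- and its expected social cost is at most (α+β)·H_n·E[OPT]
      (∑ R : Fin n → T, (∏ j, ρ (R j)) *
          ∑ i, playerCost c (fun j => s j (R j)) i)
        ≤ (α + β) * (∑ k ∈ Finset.range n, (1 : ℝ) / (k + 1)) * EOPT := by
  classical
  rcases Nat.eq_zero_or_pos n with n0 | npos
  · subst n0
    refine ⟨fun _ _ => ∅, fun i => i.elim0, fun i => i.elim0, ?_⟩
    simp
  -- n ≥ 1
  have hTne : Nonempty T := by
    by_contra hT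
    rw [not_nonempty_iff] at hT
    haveI : IsEmpty (Fin n → T) := ⟨fun R => hT.false (R ⟨0, npos⟩)⟩
    rw [hEOPTdef, Finset.univ_eq_empty, Finset.sum_empty] at hEOPT
    exact lt_irrefl 0 hEOPT
  set i0 : Fin n := ⟨0, npos⟩ with hi0
  -- basic facts
  have hPnn : ∀ R : Fin n → T, 0 ≤ ∏ j, ρ (R j) :=
    fun R => Finset.prod_nonneg (fun j _ => hρ0 _)
  have hsum1 : ∑ R : Fin n → T, ∏ j, ρ (R j) = 1 := BPoSAux.sumP ρ hρ1
  have hoptnn : ∀ U : Multiset T, 0 ≤ optc U := by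
    intro U
    obtain ⟨S, _, hSx⟩ := (hopt U).1
    rw [hSx]
    exact Finset.sum_nonneg (fun e _ => hc e)
  have hoptmono : ∀ (U : Multiset T) (x : T), optc U ≤ optc (x ::ₘ U) := by
    intro U x
    obtain ⟨S, hS, hx⟩ := (hopt (x ::ₘ U)).1
    exact (hopt U).2 ⟨S, fun t ht => hS t (Multiset.mem_cons_of_mem ht), hx⟩
  have hFane : ∀ t : T, ∃ a, a ∈ Fa t := by
    intro t
    obtain ⟨S, hS, _⟩ := (hopt {t}).1
    obtain ⟨a, ha, _⟩ := hS t (Multiset.mem_singleton_self t)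
    exact ⟨a, ha⟩
  -- multiset decomposition
  have hval : i0 ::ₘ (univ : Finset (Fin n)).val.erase i0 = (univ : Finset (Fin n)).val :=
    Multiset.cons_erase (by simp)
  have hmapW : ∀ W : Fin n → T,
      (univ : Finset (Fin n)).val.map W = W i0 ::ₘ ((univ : Finset (Fin n)).val.erase i0).map W := by
    intro W
    conv_lhs => rw [← hval]
    rw [Multiset.map_cons]
  have hUWupd : ∀ (W : Fin n → T) (x : T),
      ((univ : Finset (Fin n)).val.erase i0).map (Function.update W i0 x)
        = ((univ : Finset (Fin n)).val.erase i0).map W := by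
    intro W x
    refine Multiset.map_congr rfl ?_
    intro j hj
    have hnd : ((univ : Finset (Fin n)).val).Nodup := (univ : Finset (Fin n)).nodup
    have hjne : j ≠ i0 := (hnd.mem_erase_iff.mp hj).1
    exact Function.update_of_ne hjne x W
  
  -- the sampled-profile strategy
  have hσfeas : ∀ (W : Fin n → T) (x : T),
      A (((univ : Finset (Fin n)).val.erase i0).map W)
        ∪ B (A (((univ : Finset (Fin n)).val.erase i0).map W)) x ∈ Fa x := by
    intro W x
    obtain ⟨a, haF, hsub⟩ := hB (A (((univ : Finset (Fin n)).val.erase i0).map W))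
      (((univ : Finset (Fin n)).val.erase i0).map W) x
      (hAfeas _) x (Multiset.mem_cons_self x _)
    exact hup x a _ haF hsub
  -- the expected-potential minimizer over feasible strategy profiles
  obtain ⟨⟨sstar, hsstarFeas⟩, -, hsstarmin0⟩ :=
    (univ : Finset {s : Fin n → T → Finset E // ∀ i t, s i t ∈ Fa t}).exists_min_image
      (fun s => ∑ R : Fin n → T, (∏ j, ρ (R j)) * BPoSAux.pot c (fun j => s.1 j (R j)))
      ⟨⟨fun _ x => A (((univ : Finset (Fin n)).val.erase i0).map (fun _ => Classical.arbitrary T))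
          ∪ B (A (((univ : Finset (Fin n)).val.erase i0).map (fun _ => Classical.arbitrary T))) x,
        fun i t => hσfeas _ t⟩, Finset.mem_univ _⟩
  have hsstarmin : ∀ s' : Fin n → T → Finset E, (∀ i t, s' i t ∈ Fa t) →
      (∑ R : Fin n → T, (∏ j, ρ (R j)) * BPoSAux.pot c (fun j => sstar j (R j)))
        ≤ ∑ R : Fin n → T, (∏ j, ρ (R j)) * BPoSAux.pot c (fun j => s' j (R j)) :=
    fun s' hs' => hsstarmin0 ⟨s', hs'⟩ (Finset.mem_univ _)
  -- minimality against the sampled profiles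
  have hGσ : ∀ W : Fin n → T,
      (∑ R : Fin n → T, (∏ j, ρ (R j)) * BPoSAux.pot c (fun j => sstar j (R j)))
        ≤ ∑ R : Fin n → T, (∏ j, ρ (R j)) * BPoSAux.pot c (fun j =>
            A (((univ : Finset (Fin n)).val.erase i0).map W)
              ∪ B (A (((univ : Finset (Fin n)).val.erase i0).map W)) (R j)) :=
    fun W => hsstarmin (fun _ x =>
      A (((univ : Finset (Fin n)).val.erase i0).map W)
        ∪ B (A (((univ : Finset (Fin n)).val.erase i0).map W)) x) (fun i t => hσfeas W t)
  -- per-realization social cost bound for the sampled profile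
  have hsocσ : ∀ (W R : Fin n → T),
      ∑ i, playerCost c (fun j =>
          A (((univ : Finset (Fin n)).val.erase i0).map W)
            ∪ B (A (((univ : Finset (Fin n)).val.erase i0).map W)) (R j)) i
        ≤ (∑ e ∈ A (((univ : Finset (Fin n)).val.erase i0).map W), c e)
          + β * ∑ k : Fin n, ξ (R k ::ₘ ((univ : Finset (Fin n)).val.erase i0).map W) (R k) := by
    intro W R
    rw [BPoSAux.socialCost_eq]
    set U : Multiset T := ((univ : Finset (Fin n)).val.erase i0).map W with hU
    have step1 : ∀ e : E, (if BPoSAux.nuse (fun j => A U ∪ B (A U) (R j)) e = 0 then 0 else c e)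
        ≤ (if e ∈ A U then c e else 0) + ∑ k : Fin n, (if e ∈ B (A U) (R k) then c e else 0) := by
      intro e
      have hnn1 : (0:ℝ) ≤ (if e ∈ A U then c e else 0) := by split <;> simp [hc e]
      have hnn2 : ∀ k : Fin n, (0:ℝ) ≤ (if e ∈ B (A U) (R k) then c e else 0) := by
        intro k; split <;> simp [hc e]
      rcases eq_or_ne (BPoSAux.nuse (fun j => A U ∪ B (A U) (R j)) e) 0 with h | h
      · rw [if_pos h]
        exact add_nonneg hnn1 (Finset.sum_nonneg (fun k _ => hnn2 k))
      · rw [if_neg h]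
        have hex : ∃ k : Fin n, e ∈ A U ∪ B (A U) (R k) := by
          by_contra hcon
          push_neg at hcon
          apply h
          unfold BPoSAux.nuse
          rw [Finset.card_eq_zero, Finset.filter_eq_empty_iff]
          exact fun k _ => hcon k
        obtain ⟨k, hk⟩ := hex
        rcases Finset.mem_union.mp hk with hA2 | hB2
        · have h1 : c e ≤ (if e ∈ A U then c e else 0) := by rw [if_pos hA2]
          have h2 : (0:ℝ) ≤ ∑ k : Fin n, (if e ∈ B (A U) (R k) then c e else 0) :=
            Finset.sum_nonneg (fun k _ => hnn2 k)
          linarith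
        · have h1 : (if e ∈ B (A U) (R k) then c e else 0)
              ≤ ∑ k' : Fin n, (if e ∈ B (A U) (R k') then c e else 0) :=
            Finset.single_le_sum (fun k' _ => hnn2 k') (Finset.mem_univ k)
          rw [if_pos hB2] at h1
          linarith
    calc ∑ e : E, (if BPoSAux.nuse (fun j => A U ∪ B (A U) (R j)) e = 0 then 0 else c e)
        ≤ ∑ e : E, ((if e ∈ A U then c e else 0)
            + ∑ k : Fin n, (if e ∈ B (A U) (R k) then c e else 0)) :=
          Finset.sum_le_sum (fun e _ => step1 e)
      _ = (∑ e ∈ A U, c e) + ∑ k : Fin n, ∑ e ∈ B (A U) (R k), c e := by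
          rw [Finset.sum_add_distrib]
          congr 1
          · rw [Finset.sum_ite_mem, Finset.univ_inter]
          · rw [Finset.sum_comm]
            exact Finset.sum_congr rfl (fun k _ => by rw [Finset.sum_ite_mem, Finset.univ_inter])
      _ ≤ (∑ e ∈ A U, c e) + β * ∑ k : Fin n, ξ (R k ::ₘ U) (R k) := by
          rw [Finset.mul_sum]
          exact add_le_add_right (Finset.sum_le_sum (fun k _ => hstrict U (R k))) _
  
  -- expectation over R of the potential of the sampled profile
  have hexp1 : ∀ W : Fin n → T,
      (∑ R : Fin n → T, (∏ j, ρ (R j)) * BPoSAux.pot c (fun j =>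
          A (((univ : Finset (Fin n)).val.erase i0).map W)
            ∪ B (A (((univ : Finset (Fin n)).val.erase i0).map W)) (R j)))
        ≤ BPoSAux.Hs n * ((∑ e ∈ A (((univ : Finset (Fin n)).val.erase i0).map W), c e)
            + β * ((n : ℝ) * ∑ x : T, ρ x *
                ξ (x ::ₘ ((univ : Finset (Fin n)).val.erase i0).map W) x)) := by
    intro W
    have hper : ∀ R : Fin n → T, BPoSAux.pot c (fun j =>
        A (((univ : Finset (Fin n)).val.erase i0).map W)
          ∪ B (A (((univ : Finset (Fin n)).val.erase i0).map W)) (R j))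
        ≤ BPoSAux.Hs n * ((∑ e ∈ A (((univ : Finset (Fin n)).val.erase i0).map W), c e)
            + β * ∑ k : Fin n, ξ (R k ::ₘ ((univ : Finset (Fin n)).val.erase i0).map W) (R k)) :=
      fun R => le_trans (BPoSAux.pot_le_cost c hc _)
        (mul_le_mul_of_nonneg_left (hsocσ W R) (BPoSAux.Hs_nonneg n))
    have hterm : ∀ R : Fin n → T, (∏ j, ρ (R j)) *
        (BPoSAux.Hs n * ((∑ e ∈ A (((univ : Finset (Fin n)).val.erase i0).map W), c e)
          + β * ∑ k : Fin n, ξ (R k ::ₘ ((univ : Finset (Fin n)).val.erase i0).map W) (R k)))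
        = BPoSAux.Hs n * (∑ e ∈ A (((univ : Finset (Fin n)).val.erase i0).map W), c e) * (∏ j, ρ (R j))
          + BPoSAux.Hs n * β * ((∏ j, ρ (R j)) *
              ∑ k : Fin n, ξ (R k ::ₘ ((univ : Finset (Fin n)).val.erase i0).map W) (R k)) := by
      intro R; ring
    have hswapR : ∑ R : Fin n → T, ((∏ j, ρ (R j)) *
        ∑ k : Fin n, ξ (R k ::ₘ ((univ : Finset (Fin n)).val.erase i0).map W) (R k))
        = (n : ℝ) * ∑ x : T, ρ x * ξ (x ::ₘ ((univ : Finset (Fin n)).val.erase i0).map W) x := by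
      have h1 : ∀ R : Fin n → T, (∏ j, ρ (R j)) *
          ∑ k : Fin n, ξ (R k ::ₘ ((univ : Finset (Fin n)).val.erase i0).map W) (R k)
          = ∑ k : Fin n, (∏ j, ρ (R j)) *
              ξ (R k ::ₘ ((univ : Finset (Fin n)).val.erase i0).map W) (R k) :=
        fun R => Finset.mul_sum _ _ _
      calc ∑ R : Fin n → T, ((∏ j, ρ (R j)) *
            ∑ k : Fin n, ξ (R k ::ₘ ((univ : Finset (Fin n)).val.erase i0).map W) (R k))
          = ∑ R : Fin n → T, ∑ k : Fin n, (∏ j, ρ (R j)) *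
              ξ (R k ::ₘ ((univ : Finset (Fin n)).val.erase i0).map W) (R k) :=
            Finset.sum_congr rfl (fun R _ => h1 R)
        _ = ∑ k : Fin n, ∑ R : Fin n → T, (∏ j, ρ (R j)) *
              ξ (R k ::ₘ ((univ : Finset (Fin n)).val.erase i0).map W) (R k) := Finset.sum_comm
        _ = ∑ k : Fin n, ∑ x : T, ρ x *
              ξ (x ::ₘ ((univ : Finset (Fin n)).val.erase i0).map W) x :=
            Finset.sum_congr rfl (fun k _ => BPoSAux.marg ρ hρ1 k
              (fun x => ξ (x ::ₘ ((univ : Finset (Fin n)).val.erase i0).map W) x))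
        _ = (n : ℝ) * ∑ x : T, ρ x * ξ (x ::ₘ ((univ : Finset (Fin n)).val.erase i0).map W) x := by
            rw [Finset.sum_const, Finset.card_univ, Fintype.card_fin, nsmul_eq_mul]
    calc ∑ R : Fin n → T, (∏ j, ρ (R j)) * BPoSAux.pot c (fun j =>
          A (((univ : Finset (Fin n)).val.erase i0).map W)
            ∪ B (A (((univ : Finset (Fin n)).val.erase i0).map W)) (R j))
        ≤ ∑ R : Fin n → T, (∏ j, ρ (R j)) *
            (BPoSAux.Hs n * ((∑ e ∈ A (((univ : Finset (Fin n)).val.erase i0).map W), c e)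
              + β * ∑ k : Fin n, ξ (R k ::ₘ ((univ : Finset (Fin n)).val.erase i0).map W) (R k))) :=
          Finset.sum_le_sum (fun R _ => mul_le_mul_of_nonneg_left (hper R) (hPnn R))
      _ = BPoSAux.Hs n * (∑ e ∈ A (((univ : Finset (Fin n)).val.erase i0).map W), c e)
            * (∑ R : Fin n → T, ∏ j, ρ (R j))
          + BPoSAux.Hs n * β * ∑ R : Fin n → T, ((∏ j, ρ (R j)) *
              ∑ k : Fin n, ξ (R k ::ₘ ((univ : Finset (Fin n)).val.erase i0).map W) (R k)) := by
          rw [Finset.sum_congr rfl (fun R _ => hterm R), Finset.sum_add_distrib,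
            ← Finset.mul_sum, ← Finset.mul_sum]
      _ = BPoSAux.Hs n * ((∑ e ∈ A (((univ : Finset (Fin n)).val.erase i0).map W), c e)
            + β * ((n : ℝ) * ∑ x : T, ρ x *
                ξ (x ::ₘ ((univ : Finset (Fin n)).val.erase i0).map W) x)) := by
          rw [hsum1, hswapR]; ring
  
  -- collapse the resampling of one coordinate
  have hcollapse : ∑ W : Fin n → T, (∏ j, ρ (W j)) *
      (∑ x : T, ρ x * ξ (x ::ₘ ((univ : Finset (Fin n)).val.erase i0).map W) x)
      = ∑ W : Fin n → T, (∏ j, ρ (W j)) * ξ ((univ : Finset (Fin n)).val.map W) (W i0) := by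
    have hkey : ∀ (W : Fin n → T) (x : T),
        x ::ₘ ((univ : Finset (Fin n)).val.erase i0).map W
          = (univ : Finset (Fin n)).val.map (Function.update W i0 x) := by
      intro W x
      rw [hmapW (Function.update W i0 x), Function.update_self, hUWupd W x]
    have h1 : ∀ W : Fin n → T, (∏ j, ρ (W j)) *
        (∑ x : T, ρ x * ξ (x ::ₘ ((univ : Finset (Fin n)).val.erase i0).map W) x)
        = ∑ x : T, ρ x * ((∏ j, ρ (W j)) *
            ξ ((univ : Finset (Fin n)).val.map (Function.update W i0 x))
              ((Function.update W i0 x) i0)) := by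
      intro W
      rw [Finset.mul_sum]
      refine Finset.sum_congr rfl (fun x _ => ?_)
      rw [hkey W x, Function.update_self]
      ring
    calc ∑ W : Fin n → T, (∏ j, ρ (W j)) *
          (∑ x : T, ρ x * ξ (x ::ₘ ((univ : Finset (Fin n)).val.erase i0).map W) x)
        = ∑ W : Fin n → T, ∑ x : T, ρ x * ((∏ j, ρ (W j)) *
            ξ ((univ : Finset (Fin n)).val.map (Function.update W i0 x))
              ((Function.update W i0 x) i0)) := Finset.sum_congr rfl (fun W _ => h1 W)
      _ = ∑ x : T, ∑ W : Fin n → T, ρ x * ((∏ j, ρ (W j)) *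
            ξ ((univ : Finset (Fin n)).val.map (Function.update W i0 x))
              ((Function.update W i0 x) i0)) := Finset.sum_comm
      _ = ∑ x : T, ∑ W : Fin n → T, (if W i0 = x then (∏ j, ρ (W j)) *
            ξ ((univ : Finset (Fin n)).val.map W) (W i0) else 0) := by
          refine Finset.sum_congr rfl (fun x _ => ?_)
          rw [← Finset.mul_sum]
          exact BPoSAux.star_lemma ρ hρ1 i0 x
            (fun S => ξ ((univ : Finset (Fin n)).val.map S) (S i0))
      _ = ∑ W : Fin n → T, ∑ x : T, (if W i0 = x then (∏ j, ρ (W j)) *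
            ξ ((univ : Finset (Fin n)).val.map W) (W i0) else 0) := Finset.sum_comm
      _ = ∑ W : Fin n → T, (∏ j, ρ (W j)) * ξ ((univ : Finset (Fin n)).val.map W) (W i0) := by
          refine Finset.sum_congr rfl (fun W _ => ?_)
          simp
  -- exchangeability of the coordinates
  have hsymE : ∀ k : Fin n,
      (∑ W : Fin n → T, (∏ j, ρ (W j)) * ξ ((univ : Finset (Fin n)).val.map W) (W i0))
        = ∑ W : Fin n → T, (∏ j, ρ (W j)) * ξ ((univ : Finset (Fin n)).val.map W) (W k) := by
    intro k
    have hφ : Function.Bijective (fun W : Fin n → T => W ∘ (Equiv.swap i0 k)) := by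
      constructor
      · intro W1 W2 h12
        funext j
        have := congrFun h12 ((Equiv.swap i0 k).symm j)
        simpa using this
      · intro W
        exact ⟨W ∘ (Equiv.swap i0 k).symm, by funext j; simp⟩
    refine Fintype.sum_bijective _ hφ _ _ (fun W => ?_)
    have h1 : (∏ j, ρ ((W ∘ (Equiv.swap i0 k)) j)) = ∏ j, ρ (W j) :=
      Equiv.prod_comp (Equiv.swap i0 k) (fun j => ρ (W j))
    have hmapswap : (univ : Finset (Fin n)).val.map (⇑(Equiv.swap i0 k))
        = (univ : Finset (Fin n)).val := by
      have h2 := Finset.map_univ_equiv (Equiv.swap i0 k)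
      calc (univ : Finset (Fin n)).val.map (⇑(Equiv.swap i0 k))
          = ((univ : Finset (Fin n)).map (Equiv.swap i0 k).toEmbedding).val := by
            rw [Finset.map_val]; rfl
        _ = (univ : Finset (Fin n)).val := by rw [h2]
    have h2 : (univ : Finset (Fin n)).val.map (W ∘ ⇑(Equiv.swap i0 k))
        = (univ : Finset (Fin n)).val.map W := by
      rw [← Multiset.map_map, hmapswap]
    have h3 : (W ∘ ⇑(Equiv.swap i0 k)) k = W i0 := by
      simp [Equiv.swap_apply_right]
    rw [h1, h2, h3]
  -- the competitive cost-sharing bound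
  have hbeta : (n : ℝ) *
      (∑ W : Fin n → T, (∏ j, ρ (W j)) * ξ ((univ : Finset (Fin n)).val.map W) (W i0)) ≤ EOPT := by
    have h1 : ∑ k : Fin n,
        (∑ W : Fin n → T, (∏ j, ρ (W j)) * ξ ((univ : Finset (Fin n)).val.map W) (W i0))
        = (n : ℝ) * (∑ W : Fin n → T, (∏ j, ρ (W j)) *
            ξ ((univ : Finset (Fin n)).val.map W) (W i0)) := by
      rw [Finset.sum_const, Finset.card_univ, Fintype.card_fin, nsmul_eq_mul]
    rw [← h1]
    calc ∑ k : Fin n,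
        (∑ W : Fin n → T, (∏ j, ρ (W j)) * ξ ((univ : Finset (Fin n)).val.map W) (W i0))
        = ∑ k : Fin n, ∑ W : Fin n → T, (∏ j, ρ (W j)) *
            ξ ((univ : Finset (Fin n)).val.map W) (W k) :=
          Finset.sum_congr rfl (fun k _ => hsymE k)
      _ = ∑ W : Fin n → T, ∑ k : Fin n, (∏ j, ρ (W j)) *
            ξ ((univ : Finset (Fin n)).val.map W) (W k) := Finset.sum_comm
      _ = ∑ W : Fin n → T, (∏ j, ρ (W j)) *
            ∑ k : Fin n, ξ ((univ : Finset (Fin n)).val.map W) (W k) := by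
          refine Finset.sum_congr rfl (fun W _ => ?_)
          rw [Finset.mul_sum]
      _ ≤ ∑ W : Fin n → T, (∏ j, ρ (W j)) * optc ((univ : Finset (Fin n)).val.map W) := by
          refine Finset.sum_le_sum (fun W _ => mul_le_mul_of_nonneg_left ?_ (hPnn W))
          have hms : ∑ k : Fin n, ξ ((univ : Finset (Fin n)).val.map W) (W k)
              = (((univ : Finset (Fin n)).val.map W).map
                  (fun x => ξ ((univ : Finset (Fin n)).val.map W) x)).sum := by
            rw [Multiset.map_map]
            rfl
          rw [hms]
          exact hcomp _
      _ = EOPT := hEOPTdef.symm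
  -- the approximation bound
  have halpha : ∑ W : Fin n → T, (∏ j, ρ (W j)) *
      (∑ e ∈ A (((univ : Finset (Fin n)).val.erase i0).map W), c e) ≤ α * EOPT := by
    calc ∑ W : Fin n → T, (∏ j, ρ (W j)) *
        (∑ e ∈ A (((univ : Finset (Fin n)).val.erase i0).map W), c e)
        ≤ ∑ W : Fin n → T, (∏ j, ρ (W j)) *
            (α * optc ((univ : Finset (Fin n)).val.map W)) := by
          refine Finset.sum_le_sum (fun W _ => mul_le_mul_of_nonneg_left ?_ (hPnn W))
          calc ∑ e ∈ A (((univ : Finset (Fin n)).val.erase i0).map W), c e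
              ≤ α * optc (((univ : Finset (Fin n)).val.erase i0).map W) := hAapx _
            _ ≤ α * optc (W i0 ::ₘ ((univ : Finset (Fin n)).val.erase i0).map W) :=
                mul_le_mul_of_nonneg_left (hoptmono _ _) hα
            _ = α * optc ((univ : Finset (Fin n)).val.map W) := by rw [hmapW W]
      _ = α * EOPT := by
          rw [hEOPTdef, Finset.mul_sum]
          exact Finset.sum_congr rfl (fun W _ => by ring)
  -- the expected-potential bound for the minimizer
  have hGbound : (∑ R : Fin n → T, (∏ j, ρ (R j)) * BPoSAux.pot c (fun j => sstar j (R j)))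
      ≤ BPoSAux.Hs n * ((α + β) * EOPT) := by
    have havg : (∑ R : Fin n → T, (∏ j, ρ (R j)) * BPoSAux.pot c (fun j => sstar j (R j)))
        ≤ ∑ W : Fin n → T, (∏ j, ρ (W j)) *
            (BPoSAux.Hs n * ((∑ e ∈ A (((univ : Finset (Fin n)).val.erase i0).map W), c e)
              + β * ((n : ℝ) * ∑ x : T, ρ x *
                  ξ (x ::ₘ ((univ : Finset (Fin n)).val.erase i0).map W) x))) := by
      calc (∑ R : Fin n → T, (∏ j, ρ (R j)) * BPoSAux.pot c (fun j => sstar j (R j)))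
          = (∑ W : Fin n → T, ∏ j, ρ (W j)) *
              (∑ R : Fin n → T, (∏ j, ρ (R j)) * BPoSAux.pot c (fun j => sstar j (R j))) := by
            rw [hsum1, one_mul]
        _ = ∑ W : Fin n → T, (∏ j, ρ (W j)) *
              (∑ R : Fin n → T, (∏ j, ρ (R j)) * BPoSAux.pot c (fun j => sstar j (R j))) :=
            Finset.sum_mul _ _ _
        _ ≤ ∑ W : Fin n → T, (∏ j, ρ (W j)) *
              (BPoSAux.Hs n * ((∑ e ∈ A (((univ : Finset (Fin n)).val.erase i0).map W), c e)
                + β * ((n : ℝ) * ∑ x : T, ρ x *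
                    ξ (x ::ₘ ((univ : Finset (Fin n)).val.erase i0).map W) x))) :=
            Finset.sum_le_sum (fun W _ => mul_le_mul_of_nonneg_left
              (le_trans (hGσ W) (hexp1 W)) (hPnn W))
    have hterm2 : ∀ W : Fin n → T, (∏ j, ρ (W j)) *
        (BPoSAux.Hs n * ((∑ e ∈ A (((univ : Finset (Fin n)).val.erase i0).map W), c e)
          + β * ((n : ℝ) * ∑ x : T, ρ x *
              ξ (x ::ₘ ((univ : Finset (Fin n)).val.erase i0).map W) x)))
        = BPoSAux.Hs n * ((∏ j, ρ (W j)) *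
            (∑ e ∈ A (((univ : Finset (Fin n)).val.erase i0).map W), c e))
          + (BPoSAux.Hs n * β * (n : ℝ)) * ((∏ j, ρ (W j)) *
              (∑ x : T, ρ x * ξ (x ::ₘ ((univ : Finset (Fin n)).val.erase i0).map W) x)) := by
      intro W; ring
    have hsplitW : ∑ W : Fin n → T, (∏ j, ρ (W j)) *
        (BPoSAux.Hs n * ((∑ e ∈ A (((univ : Finset (Fin n)).val.erase i0).map W), c e)
          + β * ((n : ℝ) * ∑ x : T, ρ x *
              ξ (x ::ₘ ((univ : Finset (Fin n)).val.erase i0).map W) x)))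
        = BPoSAux.Hs n * (∑ W : Fin n → T, (∏ j, ρ (W j)) *
            (∑ e ∈ A (((univ : Finset (Fin n)).val.erase i0).map W), c e))
          + (BPoSAux.Hs n * β * (n : ℝ)) * (∑ W : Fin n → T, (∏ j, ρ (W j)) *
              (∑ x : T, ρ x * ξ (x ::ₘ ((univ : Finset (Fin n)).val.erase i0).map W) x)) := by
      rw [Finset.sum_congr rfl (fun W _ => hterm2 W), Finset.sum_add_distrib,
        ← Finset.mul_sum, ← Finset.mul_sum]
    have hHs := BPoSAux.Hs_nonneg n
    have hfin1 : (BPoSAux.Hs n * β * (n : ℝ)) * (∑ W : Fin n → T, (∏ j, ρ (W j)) *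
        (∑ x : T, ρ x * ξ (x ::ₘ ((univ : Finset (Fin n)).val.erase i0).map W) x))
        ≤ BPoSAux.Hs n * β * EOPT := by
      rw [hcollapse]
      calc (BPoSAux.Hs n * β * (n : ℝ)) * (∑ W : Fin n → T, (∏ j, ρ (W j)) *
          ξ ((univ : Finset (Fin n)).val.map W) (W i0))
          = (BPoSAux.Hs n * β) * ((n : ℝ) * (∑ W : Fin n → T, (∏ j, ρ (W j)) *
              ξ ((univ : Finset (Fin n)).val.map W) (W i0))) := by ring
        _ ≤ (BPoSAux.Hs n * β) * EOPT :=
            mul_le_mul_of_nonneg_left hbeta (mul_nonneg hHs hβ)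
        _ = BPoSAux.Hs n * β * EOPT := by ring
    have hfin2 : BPoSAux.Hs n * (∑ W : Fin n → T, (∏ j, ρ (W j)) *
        (∑ e ∈ A (((univ : Finset (Fin n)).val.erase i0).map W), c e))
        ≤ BPoSAux.Hs n * (α * EOPT) := mul_le_mul_of_nonneg_left halpha hHs
    calc (∑ R : Fin n → T, (∏ j, ρ (R j)) * BPoSAux.pot c (fun j => sstar j (R j)))
        ≤ _ := havg
      _ = _ := hsplitW
      _ ≤ BPoSAux.Hs n * (α * EOPT) + BPoSAux.Hs n * β * EOPT := add_le_add hfin2 hfin1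
      _ = BPoSAux.Hs n * ((α + β) * EOPT) := by ring
  
  -- interim best responses (used for zero-probability types)
  have hminb : ∀ (i : Fin n) (t : T), ∃ b, b ∈ Fa t ∧ ∀ b' ∈ Fa t,
      (∑ R : Fin n → T, (∏ j, ρ (R j)) * playerCost c
          (Function.update (fun j => sstar j (Function.update R i t j)) i b) i)
        ≤ ∑ R : Fin n → T, (∏ j, ρ (R j)) * playerCost c
            (Function.update (fun j => sstar j (Function.update R i t j)) i b') i := by
    intro i t
    obtain ⟨a0, ha0⟩ := hFane t
    obtain ⟨⟨b, hbFa⟩, -, hbmin⟩ :=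
      (univ : Finset {b : Finset E // b ∈ Fa t}).exists_min_image
        (fun b => ∑ R : Fin n → T, (∏ j, ρ (R j)) * playerCost c
          (Function.update (fun j => sstar j (Function.update R i t j)) i b.1) i)
        ⟨⟨a0, ha0⟩, Finset.mem_univ _⟩
    exact ⟨b, hbFa, fun b' hb' => hbmin ⟨b', hb'⟩ (Finset.mem_univ _)⟩
  choose bm hbmFa hbmMin using hminb
  -- agreement of the final strategy with the minimizer on positive-probability profiles
  have hagree : ∀ R : Fin n → T, (∏ j, ρ (R j)) ≠ 0 → ∀ j : Fin n,
      (if 0 < ρ (R j) then sstar j (R j) else bm j (R j)) = sstar j (R j) := by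
    intro R hR j
    have hρj : ρ (R j) ≠ 0 := fun h0 => hR (Finset.prod_eq_zero (Finset.mem_univ j) h0)
    have hpos : 0 < ρ (R j) := lt_of_le_of_ne (hρ0 _) (Ne.symm hρj)
    rw [if_pos hpos]
  refine ⟨fun i t => if 0 < ρ t then sstar i t else bm i t, ?_, ?_, ?_⟩
  · intro i t
    by_cases h : 0 < ρ t
    · simp only [if_pos h]; exact hsstarFeas i t
    · simp only [if_neg h]; exact hbmFa i t
  · -- Bayes-Nash equilibrium
    intro i ti a' ha'
    have hEq1 : (∑ R : Fin n → T, (∏ j, ρ (R j)) * playerCost c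
        (fun j => if 0 < ρ (Function.update R i ti j)
          then sstar j (Function.update R i ti j) else bm j (Function.update R i ti j)) i)
        = ∑ R : Fin n → T, (∏ j, ρ (R j)) * playerCost c
            (Function.update (fun j => sstar j (Function.update R i ti j)) i
              (if 0 < ρ ti then sstar i ti else bm i ti)) i := by
      refine Finset.sum_congr rfl (fun R _ => ?_)
      rcases eq_or_ne (∏ j, ρ (R j)) 0 with h0 | h0
      · rw [h0, zero_mul, zero_mul]
      · congr 1
        congr 1
        funext j
        by_cases hj : j = i
        · subst hj
          have e1 : Function.update R j ti j = ti := Function.update_self j ti R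
          have e2 : Function.update (fun j' => sstar j' (Function.update R j ti j')) j
              (if 0 < ρ ti then sstar j ti else bm j ti) j
              = (if 0 < ρ ti then sstar j ti else bm j ti) := Function.update_self _ _ _
          rw [e2, e1]
        · have e1 : Function.update R i ti j = R j := Function.update_of_ne hj ti R
          have e2 : Function.update (fun j' => sstar j' (Function.update R i ti j')) i
              (if 0 < ρ ti then sstar i ti else bm i ti) j
              = sstar j (Function.update R i ti j) := Function.update_of_ne hj _ _
          rw [e2, e1]
          exact hagree R h0 j
    have hEq2 : (∑ R : Fin n → T, (∏ j, ρ (R j)) * playerCost c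
        (Function.update (fun j => if 0 < ρ (Function.update R i ti j)
          then sstar j (Function.update R i ti j) else bm j (Function.update R i ti j)) i a') i)
        = ∑ R : Fin n → T, (∏ j, ρ (R j)) * playerCost c
            (Function.update (fun j => sstar j (Function.update R i ti j)) i a') i := by
      refine Finset.sum_congr rfl (fun R _ => ?_)
      rcases eq_or_ne (∏ j, ρ (R j)) 0 with h0 | h0
      · rw [h0, zero_mul, zero_mul]
      · congr 1
        congr 1
        funext j
        by_cases hj : j = i
        · subst hj
          rw [Function.update_self, Function.update_self]
        · have e1 : Function.update R i ti j = R j := Function.update_of_ne hj ti R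
          have e2 : Function.update (fun j' => if 0 < ρ (Function.update R i ti j')
              then sstar j' (Function.update R i ti j') else bm j' (Function.update R i ti j')) i a' j
              = (if 0 < ρ (Function.update R i ti j)
                  then sstar j (Function.update R i ti j) else bm j (Function.update R i ti j)) :=
            Function.update_of_ne hj _ _
          have e3 : Function.update (fun j' => sstar j' (Function.update R i ti j')) i a' j
              = sstar j (Function.update R i ti j) := Function.update_of_ne hj _ _
          rw [e2, e3, e1]
          exact hagree R h0 j
    have hstep3 : (∑ R : Fin n → T, (∏ j, ρ (R j)) * playerCost c
        (Function.update (fun j => sstar j (Function.update R i ti j)) i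
          (if 0 < ρ ti then sstar i ti else bm i ti)) i)
        ≤ ∑ R : Fin n → T, (∏ j, ρ (R j)) * playerCost c
            (Function.update (fun j => sstar j (Function.update R i ti j)) i a') i := by
      by_cases hρti : 0 < ρ ti
      · rw [if_pos hρti]
        -- the potential argument
        have hs'feas : ∀ (j : Fin n) (t : T),
            Function.update sstar i (Function.update (sstar i) ti a') j t ∈ Fa t := by
          intro j t
          by_cases hj : j = i
          · subst hj
            rw [Function.update_self]
            by_cases ht : t = ti
            · subst ht
              rw [Function.update_self]
              exact ha'
            · rw [Function.update_of_ne ht]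
              exact hsstarFeas j t
          · rw [Function.update_of_ne hj]
            exact hsstarFeas j t
        have hGle := hsstarmin (Function.update sstar i (Function.update (sstar i) ti a')) hs'feas
        have h0le := sub_nonneg.mpr hGle
        rw [BPoSAux.strategy_pot_diff ρ c sstar i ti a'] at h0le
        have e1 : ρ ti * (∑ R : Fin n → T, (∏ j, ρ (R j)) *
            (playerCost c (Function.update (fun j => sstar j (Function.update R i ti j)) i a') i
              - playerCost c (fun j => sstar j (Function.update R i ti j)) i))
            = ∑ R : Fin n → T, (if R i = ti then (∏ j, ρ (R j)) *
                (playerCost c (Function.update (fun j => sstar j (R j)) i a') i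
                  - playerCost c (fun j => sstar j (R j)) i) else 0) :=
          BPoSAux.star_lemma ρ hρ1 i ti (fun S =>
            playerCost c (Function.update (fun j => sstar j (S j)) i a') i
              - playerCost c (fun j => sstar j (S j)) i)
        have hfid : (∑ R : Fin n → T, (∏ j, ρ (R j)) *
            (playerCost c (Function.update (fun j => sstar j (Function.update R i ti j)) i a') i
              - playerCost c (fun j => sstar j (Function.update R i ti j)) i))
            = (∑ R : Fin n → T, (∏ j, ρ (R j)) * playerCost c
                (Function.update (fun j => sstar j (Function.update R i ti j)) i a') i)
              - ∑ R : Fin n → T, (∏ j, ρ (R j)) * playerCost c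
                  (Function.update (fun j => sstar j (Function.update R i ti j)) i (sstar i ti)) i := by
          rw [← Finset.sum_sub_distrib]
          refine Finset.sum_congr rfl (fun R _ => ?_)
          have hbase : Function.update (fun j => sstar j (Function.update R i ti j)) i (sstar i ti)
              = fun j => sstar j (Function.update R i ti j) := by
            have e0 : sstar i ti = (fun j => sstar j (Function.update R i ti j)) i := by
              simp only [Function.update_self]
            rw [e0, Function.update_eq_self]
          rw [hbase]
          ring
        have hkey : 0 ≤ ρ ti * ((∑ R : Fin n → T, (∏ j, ρ (R j)) * playerCost c
            (Function.update (fun j => sstar j (Function.update R i ti j)) i a') i)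
            - ∑ R : Fin n → T, (∏ j, ρ (R j)) * playerCost c
                (Function.update (fun j => sstar j (Function.update R i ti j)) i (sstar i ti)) i) := by
          rw [← hfid, e1]
          exact h0le
        have := (mul_nonneg_iff_of_pos_left hρti).mp hkey
        linarith
      · rw [if_neg hρti]
        exact hbmMin i ti a' ha'
    exact le_trans (le_of_eq hEq1) (le_trans hstep3 (le_of_eq hEq2.symm))
  · -- expected social cost bound
    have hsoceq : (∑ R : Fin n → T, (∏ j, ρ (R j)) *
        ∑ i, playerCost c (fun j => if 0 < ρ (R j) then sstar j (R j) else bm j (R j)) i)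
        = ∑ R : Fin n → T, (∏ j, ρ (R j)) * ∑ i, playerCost c (fun j => sstar j (R j)) i := by
      refine Finset.sum_congr rfl (fun R _ => ?_)
      rcases eq_or_ne (∏ j, ρ (R j)) 0 with h0 | h0
      · rw [h0, zero_mul, zero_mul]
      · congr 1
        refine Finset.sum_congr rfl (fun i _ => ?_)
        congr 1
        funext j
        exact hagree R h0 j
    have hfinal : (∑ R : Fin n → T, (∏ j, ρ (R j)) *
        ∑ i, playerCost c (fun j => sstar j (R j)) i)
        ≤ (α + β) * (∑ k ∈ Finset.range n, (1 : ℝ) / (k + 1)) * EOPT := by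
      calc (∑ R : Fin n → T, (∏ j, ρ (R j)) * ∑ i, playerCost c (fun j => sstar j (R j)) i)
          ≤ ∑ R : Fin n → T, (∏ j, ρ (R j)) * BPoSAux.pot c (fun j => sstar j (R j)) :=
            Finset.sum_le_sum (fun R _ =>
              mul_le_mul_of_nonneg_left (BPoSAux.cost_le_pot c hc _) (hPnn R))
        _ ≤ BPoSAux.Hs n * ((α + β) * EOPT) := hGbound
        _ = (α + β) * (∑ k ∈ Finset.range n, (1 : ℝ) / (k + 1)) * EOPT := by
            unfold BPoSAux.Hs
            ring
    exact le_trans (le_of_eq hsoceq) hfinal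
end
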